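/- arXiv:1605.05089 — 10 statements merged into one kernel-verified Lean document; each statement's English description precedes it below -/
import Mathlib

section
/- Let a ∈ R, let χ ∈ Σ_a, and let u : R → Rˣ be any function such that x − u(x) ∈ ann(a) for every x ∈ F_a (such a function exists). Then λ_χ = ∑_{x∈F_a} β(x)·χ(u(x)) is an eigenvalue of B_R, i.e. a root of the characteristic polynomial of B_R regarded as a complex matrix. -/
open Finset Polynomial

open scoped Classical

/-- The multiplication part `B_R` of the transition matrix:
`B_R(a,b) = ∑_{x ∈ R : a·x = b} β(x)`. -/
noncomputable def Bmat (R : Type) [CommRing R] [Fintype R] (β : R → ℝ) :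
    Matrix R R ℝ :=
  fun a b => ∑ x ∈ Finset.univ.filter (fun x => a * x = b), β x

/-- The annihilator ideal `ann(a) = {x ∈ R : x·a = 0}`. -/
def annId {R : Type} [CommRing R] (a : R) : Ideal R where
  carrier := {x | x * a = 0}
  add_mem' := by
    intro x y hx hy
    simp only [Set.mem_setOf_eq] at *
    rw [add_mul, hx, hy, add_zero]
  zero_mem' := by simp
  smul_mem' := by
    intro c x hx
    simp only [smul_eq_mul, Set.mem_setOf_eq] at *
    rw [mul_assoc, hx, mul_zero]

/-- For every `χ ∈ Σ_a` and compatible choice of units `u`, the number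
`λ_χ = ∑_{x ∈ F_a} β(x)·χ(u(x))` is an eigenvalue of `B_R`. -/
theorem stmt1 (R : Type) [CommRing R] [Fintype R]
    (β : R → ℝ) (hβ : ∀ x, 0 ≤ β x) (hβsum : ∑ x, β x = 1)
    (a : R) (χ : Rˣ →* ℂˣ)
    (hχ : ∀ v : Rˣ, ((v : R) - 1) ∈ annId a → χ v = 1)
    (u : R → Rˣ)
    (hu : ∀ x : R, IsUnit (Ideal.Quotient.mk (annId a) x) → x - (u x : R) ∈ annId a) :
    (((Bmat R β).map (fun t : ℝ => (t : ℂ))).charpoly).IsRoot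
      (∑ x ∈ Finset.univ.filter
          (fun x => IsUnit (Ideal.Quotient.mk (annId a) x)),
        (β x : ℂ) * (χ (u x) : ℂ)) := by
  classical
  set M := (Bmat R β).map (fun t : ℝ => (t : ℂ)) with hM
  set lam : ℂ := ∑ x ∈ Finset.univ.filter
      (fun x => IsUnit (Ideal.Quotient.mk (annId a) x)),
      (β x : ℂ) * (χ (u x) : ℂ) with hlam
  set v : R → ℂ := fun c =>
    if IsUnit (Ideal.Quotient.mk (annId a) c) then (χ (u c) : ℂ) else 0 with hv
  have hmul : ∀ c x : R, IsUnit (Ideal.Quotient.mk (annId a) c) →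
      IsUnit (Ideal.Quotient.mk (annId a) x) →
      (χ (u (c * x)) : ℂ) = (χ (u c) : ℂ) * (χ (u x) : ℂ) := by
    intro c x hc hx
    have hcx : IsUnit (Ideal.Quotient.mk (annId a) (c * x)) := by
      rw [map_mul]; exact hc.mul hx
    have h1 : (c * x - (u (c * x) : R)) * a = 0 := hu _ hcx
    have h2 : (c - (u c : R)) * a = 0 := hu _ hc
    have h3 : (x - (u x : R)) * a = 0 := hu _ hx
    have hdiff : ((u (c * x) : R) - (u c : R) * (u x : R)) * a = 0 := by
      linear_combination -h1 + x * h2 + ((u c : R)) * h3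
    have huu : ((u c : R) * (u x : R)) * (((u c * u x)⁻¹ : Rˣ) : R) = 1 := by
      rw [← Units.val_mul, ← Units.val_mul, mul_inv_cancel, Units.val_one]
    have hw1 : χ (u (c * x) * (u c * u x)⁻¹) = 1 := by
      apply hχ
      show ((↑(u (c * x) * (u c * u x)⁻¹) : R) - 1) * a = 0
      rw [Units.val_mul]
      linear_combination (((u c * u x)⁻¹ : Rˣ) : R) * hdiff + a * huu
    have key : χ (u (c * x)) =
        χ (u (c * x) * (u c * u x)⁻¹) * χ (u c * u x) := by
      rw [← map_mul]; congr 1; group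
    rw [key, hw1, one_mul, map_mul, Units.val_mul]
  have hmv : M.mulVec v = lam • v := by
    funext c
    have hexp : M.mulVec v c = ∑ x : R, (β x : ℂ) * v (c * x) := by
      simp only [Matrix.mulVec, dotProduct, hM, Matrix.map_apply, Bmat]
      push_cast
      rw [← Finset.sum_fiberwise Finset.univ (fun x => c * x) (fun x => (β x : ℂ) * v (c * x))]
      refine Finset.sum_congr rfl (fun b _ => ?_)
      rw [Finset.sum_mul]
      refine Finset.sum_congr rfl (fun x hx => ?_)
      rw [Finset.mem_filter] at hx
      rw [hx.2]
    rw [hexp]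
    by_cases hc : IsUnit (Ideal.Quotient.mk (annId a) c)
    · have key : ∀ x : R, (β x : ℂ) * v (c * x) =
          (if IsUnit (Ideal.Quotient.mk (annId a) x) then (β x : ℂ) * (χ (u x) : ℂ) else 0)
            * (χ (u c) : ℂ) := by
        intro x
        by_cases hx : IsUnit (Ideal.Quotient.mk (annId a) x)
        · have hcx : IsUnit (Ideal.Quotient.mk (annId a) (c * x)) := by
            rw [map_mul]; exact hc.mul hx
          simp only [hv, hcx, if_pos, hx, hmul c x hc hx]
          ring
        · have hcx : ¬ IsUnit (Ideal.Quotient.mk (annId a) (c * x)) := by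
            intro h
            rw [map_mul] at h
            exact hx (isUnit_of_mul_isUnit_right h)
          simp only [hv]
          rw [if_neg hcx, if_neg hx, mul_zero, zero_mul]
      rw [Finset.sum_congr rfl (fun x _ => key x), ← Finset.sum_mul]
      have : (∑ x : R, if IsUnit (Ideal.Quotient.mk (annId a) x)
          then (β x : ℂ) * (χ (u x) : ℂ) else 0) = lam := by
        rw [hlam, Finset.sum_filter]
      rw [this]
      simp only [Pi.smul_apply, hv, hc, if_pos, smul_eq_mul]
      try ring
    · have key : ∀ x : R, (β x : ℂ) * v (c * x) = 0 := by
        intro x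
        have hcx : ¬ IsUnit (Ideal.Quotient.mk (annId a) (c * x)) := by
          intro h
          rw [map_mul] at h
          exact hc (isUnit_of_mul_isUnit_left h)
        simp only [hv]
        rw [if_neg hcx, mul_zero]
      rw [Finset.sum_congr rfl (fun x _ => key x)]
      simp [hv, hc]
  have hv0 : v ≠ 0 := by
    intro h
    have h1 : v 1 = 0 := by rw [h]; rfl
    have hone : IsUnit (Ideal.Quotient.mk (annId a) (1 : R)) := by simp
    simp only [hv, hone, if_pos] at h1
    exact (χ (u 1)).ne_zero h1
  have hev : Module.End.HasEigenvalue (Matrix.toLin' M) lam := by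
    apply Module.End.hasEigenvalue_of_hasEigenvector (x := v)
    constructor
    · rw [Module.End.mem_eigenspace_iff, Matrix.toLin'_apply, hmv]
    · exact hv0
  have hroot : (minpoly ℂ M).IsRoot lam := by
    rw [← Matrix.minpoly_toLin']
    exact (Module.End.hasEigenvalue_iff_isRoot).mp hev
  exact hroot.dvd (Matrix.minpoly_dvd_charpoly M)
end

section
/- Let λ ∈ ℂ be any root of the characteristic polynomial of B_R (regarded as a complex matrix). Then there exist a ∈ R, a character χ ∈ Σ_a, and a function u : R → Rˣ with x − u(x) ∈ ann(a) for every x ∈ F_a, such that λ = ∑_{x∈F_a} β(x)·χ(u(x)). -/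
open Finset Polynomial

open scoped Classical

lemma exists_pow_sq_eq {M : Type*} [Monoid M] [Finite M] (x : M) :
    ∃ n, 0 < n ∧ x ^ n * x ^ n = x ^ n := by
  obtain ⟨i, j, hne, hij⟩ := Finite.exists_ne_map_eq_of_infinite (fun n : ℕ => x ^ n)
  wlog h : i < j generalizing i j
  · exact this j i hne.symm hij.symm (by omega)
  set p := j - i with hp
  have hpi : x ^ (i + p) = x ^ i := by
    rw [show i + p = j by omega]; exact hij.symm
  have hstep : ∀ m, i ≤ m → x ^ (m + p) = x ^ m := by
    intro m hm
    obtain ⟨d, rfl⟩ := Nat.exists_eq_add_of_le hm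
    rw [show i + d + p = (i + p) + d by ring, pow_add, hpi, ← pow_add]
  have hiter : ∀ k m, i ≤ m → x ^ (m + k * p) = x ^ m := by
    intro k
    induction k with
    | zero => intro m _; simp
    | succ k ih =>
      intro m hm
      rw [show m + (k + 1) * p = (m + k * p) + p by ring, hstep _ (by omega), ih m hm]
  have hppos : 0 < p := by omega
  refine ⟨(i + 1) * p, by positivity, ?_⟩
  rw [← pow_add]
  exact hiter (i + 1) ((i + 1) * p) (by nlinarith)

lemma exists_unit_of_mul_eq {R : Type} [CommRing R] [Fintype R] (a x y : R)
    (h : a * (x * y) = a) : ∃ w : Rˣ, a * x = a * (w : R) := by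
  obtain ⟨n, hn, he2⟩ := exists_pow_sq_eq x
  set e := x ^ n with hedef
  have hxy : ∀ k : ℕ, a * (x * y) ^ k = a := by
    intro k
    induction k with
    | zero => simp
    | succ k ih =>
      rw [pow_succ, ← mul_assoc, ih, h]
  have hae : a * (e * y ^ n) = a := by
    have := hxy n
    rwa [mul_pow, ← hedef, ← mul_assoc, mul_assoc] at this
  have h1e : a * (1 - e) = 0 := by
    calc a * (1 - e) = a * (e * y ^ n) * (1 - e) := by rw [hae]
    _ = a * y ^ n * (e * (1 - e)) := by ring
    _ = 0 := by rw [mul_sub, mul_one, he2, sub_self, mul_zero]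
  obtain ⟨m, rfl⟩ : ∃ m, n = m + 1 := ⟨n - 1, by omega⟩
  have hx : x * x ^ m = e := by rw [hedef, pow_succ']
  have hmul : (x * e + (1 - e)) * (x ^ m * e + (1 - e)) = 1 := by
    linear_combination (e * e) * hx + (e + 2 - x - x ^ m) * he2
  refine ⟨⟨x * e + (1 - e), x ^ m * e + (1 - e), hmul, by rw [mul_comm]; exact hmul⟩, ?_⟩
  show a * x = a * (x * e + (1 - e))
  linear_combination (x - 1) * h1e


lemma key_char {G : Type*} [CommGroup G] [Fintype G] {g : G → ℂ} (hg : g ≠ 0) :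
    ∃ χ : G →* ℂˣ, ∀ (ν : G → ℂ) (t : ℂ),
      (∀ v : G, ∑ w : G, ν w * g (v * w) = t * g v) → ∑ w : G, ν w * (χ w : ℂ) = t := by
  have hexp : (Monoid.exponent G : ℂ) ≠ 0 := by
    exact_mod_cast (Monoid.ExponentExists.of_finite (G := G)).exponent_pos.ne'
  haveI : NeZero ((Monoid.exponent G : ℂ)) := ⟨hexp⟩
  obtain ⟨e⟩ := CommGroup.monoidHom_mulEquiv_of_hasEnoughRootsOfUnity G ℂ
  haveI : Fintype (G →* ℂˣ) := Fintype.ofEquiv G e.toEquiv.symm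
  have hcard : Fintype.card (G →* ℂˣ) = Fintype.card G := Fintype.card_congr e.toEquiv
  set fam : (G →* ℂˣ) → (G → ℂ) := fun χ v => (χ v : ℂ) with hfam
  have li : LinearIndependent ℂ fam := by
    have h0 := linearIndependent_monoidHom G ℂ
    have hinj : Function.Injective (fun χ : G →* ℂˣ => (Units.coeHom ℂ).comp χ) := by
      intro χ₁ χ₂ h
      apply MonoidHom.ext
      intro v
      exact Units.ext (DFunLike.congr_fun h v)
    have h1 := h0.comp (fun χ : G →* ℂˣ => (Units.coeHom ℂ).comp χ) hinj
    exact h1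
  haveI : Nonempty (G →* ℂˣ) := ⟨1⟩
  have hfr : Fintype.card (G →* ℂˣ) = Module.finrank ℂ (G → ℂ) := by
    rw [hcard, Module.finrank_pi]
  set B := basisOfLinearIndependentOfCardEqFinrank li hfr with hBdef
  have hB : ⇑B = fam := coe_basisOfLinearIndependentOfCardEqFinrank li hfr
  obtain ⟨χ₀, hc0⟩ : ∃ χ₀, B.repr g χ₀ ≠ 0 := by
    by_contra hall
    push_neg at hall
    apply hg
    have h0 : B.repr g = 0 := Finsupp.ext hall
    simpa using congrArg B.repr.symm h0
  have hgsum : ∑ χ, B.repr g χ • fam χ = g := by rw [← hB]; exact B.sum_repr g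
  have hgv : ∀ v' : G, g v' = ∑ χ, B.repr g χ * (χ v' : ℂ) := by
    intro v'
    conv_lhs => rw [← hgsum]
    simp [hfam, smul_eq_mul]
  refine ⟨χ₀, fun ν t hrel => ?_⟩
  have hzero : ∀ χ, (B.repr g χ * (∑ w, ν w * ((χ w : ℂ))) - t * B.repr g χ) = 0 := by
    refine Fintype.linearIndependent_iff.mp li _ ?_
    funext v
    have h1 : ∑ w : G, ν w * g (v * w) = t * g v := hrel v
    rw [Finset.sum_apply]
    calc ∑ χ, ((B.repr g χ * (∑ w, ν w * ((χ w : ℂ))) - t * B.repr g χ) • fam χ) v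
        = ∑ χ, ((∑ w, B.repr g χ * (ν w * ((χ w : ℂ))) * (χ v : ℂ))
            - t * (B.repr g χ * (χ v : ℂ))) := by
          apply Finset.sum_congr rfl
          intro χ _
          simp only [hfam, Pi.smul_apply, smul_eq_mul]
          rw [sub_mul, Finset.mul_sum, Finset.sum_mul, mul_assoc]
    _ = (∑ w : G, ν w * g (v * w)) - t * g v := by
          rw [Finset.sum_sub_distrib]
          congr 1
          · rw [Finset.sum_comm]
            apply Finset.sum_congr rfl
            intro w _
            rw [hgv (v * w), Finset.mul_sum]
            apply Finset.sum_congr rfl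
            intro χ _
            have : ((χ (v * w) : ℂ)) = (χ v : ℂ) * (χ w : ℂ) := by
              rw [map_mul]; rfl
            rw [this]
            ring
          · rw [hgv v, Finset.mul_sum]
    _ = 0 := by rw [h1, sub_self]
  have hz := hzero χ₀
  have h2 : B.repr g χ₀ * ((∑ w, ν w * ((χ₀ w : ℂ))) - t) = 0 := by linear_combination hz
  rcases mul_eq_zero.mp h2 with h | h
  · exact absurd h hc0
  · exact sub_eq_zero.mp h

/-- Every eigenvalue of `B_R` is of the form `∑_{x ∈ F_a} β(x)·χ(u(x))`
for some `a ∈ R`, `χ ∈ Σ_a`, and compatible choice of units `u`. -/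
theorem stmt2 (R : Type) [CommRing R] [Fintype R]
    (β : R → ℝ) (hβ : ∀ x, 0 ≤ β x) (hβsum : ∑ x, β x = 1)
    (lam : ℂ)
    (hlam : (((Bmat R β).map (fun t : ℝ => (t : ℂ))).charpoly).IsRoot lam) :
    ∃ (a : R) (χ : Rˣ →* ℂˣ) (u : R → Rˣ),
      (∀ v : Rˣ, ((v : R) - 1) ∈ annId a → χ v = 1) ∧
      (∀ x : R, IsUnit (Ideal.Quotient.mk (annId a) x) → x - (u x : R) ∈ annId a) ∧
      lam = ∑ x ∈ Finset.univ.filter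
          (fun x => IsUnit (Ideal.Quotient.mk (annId a) x)),
        (β x : ℂ) * (χ (u x) : ℂ) := by

  classical
  -- Step 1: an eigenvector
  set M := (Bmat R β).map (fun t : ℝ => (t : ℂ)) with hM
  have hdet : (lam • (1 : Matrix R R ℂ) - M).det = 0 := by
    have h1 : ((Matrix.charmatrix M).map (Polynomial.eval lam)).det = 0 := by
      rw [← Polynomial.coe_evalRingHom, ← RingHom.mapMatrix_apply, ← RingHom.map_det]
      exact hlam
    have h2 : (Matrix.charmatrix M).map (Polynomial.eval lam)
        = lam • (1 : Matrix R R ℂ) - M := by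
      ext i j
      by_cases hij : i = j
      · subst hij
        simp [Matrix.charmatrix_apply_eq, Matrix.one_apply]
      · simp [Matrix.charmatrix_apply_ne _ _ _ hij, Matrix.one_apply, hij]
    rwa [h2] at h1
  obtain ⟨f, hf0, hfv⟩ := Matrix.exists_mulVec_eq_zero_iff.mpr hdet
  have heig : ∀ b : R, ∑ c : R, M b c * f c = lam * f b := by
    intro b
    have h3 : ((lam • (1 : Matrix R R ℂ) - M).mulVec f) b = 0 := congrFun hfv b
    have h4 : ((lam • (1 : Matrix R R ℂ) - M).mulVec f) b
        = lam * f b - ∑ c : R, M b c * f c := by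
      rw [Matrix.sub_mulVec]
      simp [Matrix.smul_mulVec, Matrix.one_mulVec, Matrix.mulVec, dotProduct]
    rw [h4] at h3
    linear_combination -h3
  have heig' : ∀ b : R, ∑ x : R, (β x : ℂ) * f (b * x) = lam * f b := by
    intro b
    rw [← heig b]
    rw [← Finset.sum_fiberwise Finset.univ (fun x => b * x)
      (fun x => (β x : ℂ) * f (b * x))]
    apply Finset.sum_congr rfl
    intro c _
    have h5 : M b c = ∑ x ∈ Finset.univ.filter (fun x => b * x = c), (β x : ℂ) := by
      simp [hM, Bmat, Matrix.map_apply]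
    rw [h5, Finset.sum_mul]
    apply Finset.sum_congr rfl
    intro x hx
    rw [(Finset.mem_filter.mp hx).2]
  -- Step 2: choose a with minimal span
  have hfne : ∃ b, f b ≠ 0 := by
    by_contra hall
    push_neg at hall
    exact hf0 (funext hall)
  obtain ⟨a, ha0, hamin⟩ := Set.Finite.exists_minimalFor (fun b => Ideal.span {b})
    {b | f b ≠ 0} (Set.toFinite _) hfne
  simp only [Set.mem_setOf_eq] at ha0
  -- Step 3: units
  have hPa : ∀ x : R, IsUnit (Ideal.Quotient.mk (annId a) x) →
      ∃ w : Rˣ, a * x = a * (w : R) := by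
    intro x hx
    obtain ⟨b, hb⟩ := isUnit_iff_exists_inv.mp hx
    obtain ⟨y, rfl⟩ := Ideal.Quotient.mk_surjective b
    have : x * y - 1 ∈ annId a := by
      rw [← Ideal.Quotient.eq_zero_iff_mem, map_sub, map_one, map_mul, hb, sub_self]
    have h6 : (x * y - 1) * a = 0 := this
    exact exists_unit_of_mul_eq a x y (by linear_combination h6)
  set u : R → Rˣ := fun x =>
    if h : ∃ w : Rˣ, a * x = a * (w : R) then h.choose else 1 with hu
  have huspec : ∀ x : R, IsUnit (Ideal.Quotient.mk (annId a) x) →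
      a * x = a * ((u x : Rˣ) : R) := by
    intro x hx
    have h := hPa x hx
    simp only [hu, dif_pos h]
    exact h.choose_spec
  -- Step 4: vanishing off the units
  have hvanish : ∀ (v : Rˣ) (x : R), ¬ IsUnit (Ideal.Quotient.mk (annId a) x) →
      f (a * (v : R) * x) = 0 := by
    intro v x hx
    by_contra hfx
    have hle : Ideal.span {a * (v : R) * x} ≤ Ideal.span {a} :=
      Ideal.span_singleton_le_span_singleton.mpr ⟨(v : R) * x, by ring⟩
    have heqs : Ideal.span {a} = Ideal.span {a * (v : R) * x} := le_antisymm (hamin hfx hle) hle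
    have hmem : a ∈ Ideal.span {a * (v : R) * x} := by
      rw [← heqs]; exact Ideal.mem_span_singleton_self a
    obtain ⟨c, hc⟩ := Ideal.mem_span_singleton'.mp hmem
    apply hx
    have h7 : Ideal.Quotient.mk (annId a) x * Ideal.Quotient.mk (annId a) (c * (v : R)) = 1 := by
      rw [← map_mul, ← map_one (Ideal.Quotient.mk (annId a)), Ideal.Quotient.mk_eq_mk_iff_sub_mem]
      show (x * (c * (v : R)) - 1) * a = 0
      linear_combination hc
    exact IsUnit.of_mul_eq_one _ h7
  -- Step 5: the group-level eigen relation
  set g : Rˣ → ℂ := fun w => f (a * (w : R)) with hg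
  set Fa := Finset.univ.filter (fun x : R => IsUnit (Ideal.Quotient.mk (annId a) x)) with hFa
  set ν : Rˣ → ℂ := fun w => ∑ x ∈ Fa.filter (fun x => u x = w), (β x : ℂ) with hν
  have hgrel : ∀ v : Rˣ, ∑ w : Rˣ, ν w * g (v * w) = lam * g v := by
    intro v
    have h8 := heig' (a * (v : R))
    have h9 : ∑ x : R, (β x : ℂ) * f (a * (v : R) * x)
        = ∑ x ∈ Fa, (β x : ℂ) * f (a * (v : R) * x) := by
      rw [← Finset.sum_filter_add_sum_filter_not Finset.univ
        (fun x : R => IsUnit (Ideal.Quotient.mk (annId a) x))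
        (fun x => (β x : ℂ) * f (a * (v : R) * x))]
      rw [← hFa]
      have h10 : ∑ x ∈ Finset.univ.filter
          (fun x : R => ¬ IsUnit (Ideal.Quotient.mk (annId a) x)),
          (β x : ℂ) * f (a * (v : R) * x) = 0 := by
        apply Finset.sum_eq_zero
        intro x hxmem
        rw [hvanish v x (Finset.mem_filter.mp hxmem).2, mul_zero]
      rw [h10, add_zero]
    have h11 : ∑ x ∈ Fa, (β x : ℂ) * f (a * (v : R) * x)
        = ∑ x ∈ Fa, (β x : ℂ) * g (v * u x) := by
      apply Finset.sum_congr rfl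
      intro x hxmem
      have hxu : IsUnit (Ideal.Quotient.mk (annId a) x) := (Finset.mem_filter.mp hxmem).2
      have := huspec x hxu
      congr 1
      show f (a * (v : R) * x) = f (a * ((v : R) * ((u x : Rˣ) : R)))
      congr 1
      linear_combination (v : R) * this
    have h12 : ∑ x ∈ Fa, (β x : ℂ) * g (v * u x)
        = ∑ w : Rˣ, ν w * g (v * w) := by
      rw [← Finset.sum_fiberwise Fa (fun x => u x) (fun x => (β x : ℂ) * g (v * u x))]
      apply Finset.sum_congr rfl
      intro w _
      rw [hν]
      simp only [Finset.sum_mul]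
      apply Finset.sum_congr rfl
      intro x hxmem
      rw [(Finset.mem_filter.mp hxmem).2]
    calc ∑ w : Rˣ, ν w * g (v * w) = ∑ x ∈ Fa, (β x : ℂ) * g (v * u x) := h12.symm
    _ = ∑ x ∈ Fa, (β x : ℂ) * f (a * (v : R) * x) := h11.symm
    _ = ∑ x : R, (β x : ℂ) * f (a * (v : R) * x) := h9.symm
    _ = lam * f (a * (v : R)) := by rw [← h8]
    _ = lam * g v := by rw [hg]
  have hgne : g ≠ 0 := by
    intro hzz
    apply ha0
    have : g 1 = 0 := by rw [hzz]; rfl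
    simpa [hg] using this
  -- Step 6: apply the character lemma
  obtain ⟨χ, hχ⟩ := key_char hgne
  refine ⟨a, χ, u, ?_, ?_, ?_⟩
  · intro v hv
    have hva : a * (v : R) = a := by
      have h13 : ((v : R) - 1) * a = 0 := hv
      linear_combination h13
    have h14 := hχ (fun w => if w = v then 1 else 0) 1 ?_
    · have h15 : ∑ w : Rˣ, (if w = v then (1:ℂ) else 0) * (χ w : ℂ) = (χ v : ℂ) := by
        rw [Finset.sum_eq_single v]
        · simp
        · intro w _ hw; simp [hw]
        · intro h; exact absurd (Finset.mem_univ v) h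
      rw [h15] at h14
      exact Units.ext h14
    · intro v'
      have h16 : ∑ w : Rˣ, (if w = v then (1:ℂ) else 0) * g (v' * w) = g (v' * v) := by
        rw [Finset.sum_eq_single v]
        · simp
        · intro w _ hw; simp [hw]
        · intro h; exact absurd (Finset.mem_univ v) h
      rw [h16]
      have : g (v' * v) = g v' := by
        simp only [hg]
        congr 1
        push_cast
        linear_combination (v' : R) * hva
      rw [this, one_mul]
  · intro x hx
    have := huspec x hx
    show (x - ((u x : Rˣ) : R)) * a = 0
    linear_combination this
  · have h17 := hχ ν lam hgrel
    rw [← h17, ← hFa]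
    have h18 : ∑ x ∈ Fa, (β x : ℂ) * ((χ (u x) : ℂ))
        = ∑ w : Rˣ, ν w * (χ w : ℂ) := by
      rw [← Finset.sum_fiberwise Fa (fun x => u x) (fun x => (β x : ℂ) * ((χ (u x) : ℂ)))]
      apply Finset.sum_congr rfl
      intro w _
      rw [hν]
      simp only [Finset.sum_mul]
      apply Finset.sum_congr rfl
      intro x hxmem
      rw [(Finset.mem_filter.mp hxmem).2]
    exact h18.symm
end

section
/- For all a, x ∈ R the following are equivalent: (1) x·S_a ⊆ S_a, i.e. for every y ∈ R with yR = aR one also has (x·y)R = aR; (2) the image f_a(x) of x in Q_a = R/ann(a) is a unit of Q_a (equivalently, x ∈ F_a). -/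
lemma mem_annId {R : Type} [CommRing R] (a z : R) : z ∈ annId a ↔ z * a = 0 :=
  Iff.rfl

/-- `x·S_a ⊆ S_a` if and only if the image of `x` in `R/ann(a)` is a unit. -/
theorem stmt3 (R : Type) [CommRing R] [Fintype R] (a x : R) :
    (∀ y : R, Ideal.span ({y} : Set R) = Ideal.span {a} →
        Ideal.span ({x * y} : Set R) = Ideal.span {a}) ↔
      IsUnit (Ideal.Quotient.mk (annId a) x) := by
  constructor
  · intro h
    have ha := h a rfl
    have : a ∈ Ideal.span ({x * a} : Set R) := by
      rw [ha]; exact Ideal.mem_span_singleton_self a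
    obtain ⟨c, hc⟩ := Ideal.mem_span_singleton'.mp this
    refine IsUnit.of_mul_eq_one (a := Ideal.Quotient.mk (annId a) x) (Ideal.Quotient.mk (annId a) c) ?_
    rw [← map_mul, ← map_one (Ideal.Quotient.mk (annId a)),
      Ideal.Quotient.mk_eq_mk_iff_sub_mem]
    rw [mem_annId, sub_mul, one_mul, sub_eq_zero]
    calc x * c * a = c * (x * a) := by ring
    _ = a := hc
  · intro h y hy
    obtain ⟨u, hu⟩ := h
    obtain ⟨z, hz⟩ := Ideal.Quotient.mk_surjective (↑u⁻¹ : (R ⧸ annId a))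
    have hxz : x * z * a = a := by
      have : (Ideal.Quotient.mk (annId a)) (x * z) = Ideal.Quotient.mk (annId a) 1 := by
        rw [map_mul, hz, ← hu, map_one]
        exact u.mul_inv
      rw [Ideal.Quotient.mk_eq_mk_iff_sub_mem, mem_annId, sub_mul, one_mul,
        sub_eq_zero] at this
      exact this
    have hay : a ∣ y := Ideal.span_singleton_le_span_singleton.mp hy.le
    have hya : y ∣ a := Ideal.span_singleton_le_span_singleton.mp hy.ge
    obtain ⟨s, hs⟩ := hya
    apply le_antisymm
    · exact Ideal.span_singleton_le_span_singleton.mpr (Dvd.dvd.mul_left hay x)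
    · refine Ideal.span_singleton_le_span_singleton.mpr ⟨z * s, ?_⟩
      calc a = x * z * a := hxz.symm
      _ = x * z * (y * s) := by rw [← hs]
      _ = x * y * (z * s) := by ring
end

section
/- For every a ∈ R, the set S_a of generators of the principal ideal (a) has the same cardinality as the unit group of the quotient ring Q_a = R/ann(a); that is, |{y ∈ R : yR = aR}| = |(R/ann(a))ˣ| (the bijection being induced by sending a generator x·a to f_a(x)). -/
/-- The set `S_a` of generators of the principal ideal `(a)` is in bijection with
the unit group of `R/ann(a)`. -/
theorem stmt4 (R : Type) [CommRing R] [Fintype R] (a : R) :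
    Nat.card {y : R // Ideal.span ({y} : Set R) = Ideal.span {a}} =
      Nat.card (R ⧸ annId a)ˣ := by
  classical
  have hmemI : ∀ x : R, x ∈ annId a ↔ x * a = 0 := fun x => Iff.rfl
  have hker : annId a ≤ LinearMap.ker (LinearMap.toSpanSingleton R R a) := by
    intro x hx
    simp only [LinearMap.mem_ker, LinearMap.toSpanSingleton_apply, smul_eq_mul]
    exact (hmemI x).1 hx
  let φ : (R ⧸ annId a) →ₗ[R] R :=
    Submodule.liftQ (annId a) (LinearMap.toSpanSingleton R R a) hker
  have hφ : ∀ x : R, φ (Ideal.Quotient.mk (annId a) x) = x * a := fun x => rfl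
  have hmk : ∀ x z : R,
      (Ideal.Quotient.mk (annId a) x) * (Ideal.Quotient.mk (annId a) z) = 1 ↔ x * z * a = a := by
    intro x z
    rw [← map_mul, ← map_one (Ideal.Quotient.mk (annId a)), Ideal.Quotient.mk_eq_mk_iff_sub_mem,
      hmemI, sub_mul, one_mul, sub_eq_zero]
  -- the map from units to generators
  have key : ∀ u : (R ⧸ annId a)ˣ,
      Ideal.span ({φ (u : R ⧸ annId a)} : Set R) = Ideal.span {a} := by
    intro u
    obtain ⟨x, hx⟩ := Ideal.Quotient.mk_surjective (I := annId a) (u : R ⧸ annId a)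
    obtain ⟨z, hz⟩ := Ideal.Quotient.mk_surjective (I := annId a) (↑u⁻¹ : R ⧸ annId a)
    have hxz : x * z * a = a := by
      rw [← hmk]
      rw [hx, hz, u.mul_inv]
    rw [← hx, hφ]
    apply le_antisymm
    · rw [Ideal.span_singleton_le_span_singleton]
      exact ⟨x, mul_comm x a⟩
    · rw [Ideal.span_singleton_le_span_singleton]
      exact ⟨z, by linear_combination -hxz⟩
  let F : (R ⧸ annId a)ˣ → {y : R // Ideal.span ({y} : Set R) = Ideal.span {a}} :=
    fun u => ⟨φ (u : R ⧸ annId a), key u⟩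
  have hbij : Function.Bijective F := by
    constructor
    · intro u v huv
      have h1 : φ (u : R ⧸ annId a) = φ (v : R ⧸ annId a) := congrArg Subtype.val huv
      obtain ⟨x, hx⟩ := Ideal.Quotient.mk_surjective (I := annId a) (u : R ⧸ annId a)
      obtain ⟨y, hy⟩ := Ideal.Quotient.mk_surjective (I := annId a) (v : R ⧸ annId a)
      have : x * a = y * a := by rw [← hφ, ← hφ, hx, hy, h1]
      have hxy : Ideal.Quotient.mk (annId a) x = Ideal.Quotient.mk (annId a) y := by
        rw [Ideal.Quotient.mk_eq_mk_iff_sub_mem, hmemI, sub_mul, this, sub_self]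
      ext
      rw [← hx, ← hy, hxy]
    · rintro ⟨y, hy⟩
      have hy1 : y ∈ Ideal.span ({a} : Set R) := hy ▸ Ideal.mem_span_singleton_self y
      have hy2 : a ∈ Ideal.span ({y} : Set R) := hy ▸ Ideal.mem_span_singleton_self a
      obtain ⟨x, hx⟩ := Ideal.mem_span_singleton.1 hy1
      obtain ⟨z, hz⟩ := Ideal.mem_span_singleton.1 hy2
      have hxz : x * z * a = a := by
        rw [hx] at hz
        linear_combination -hz
      have hzx : z * x * a = a := by linear_combination hxz
      refine ⟨⟨Ideal.Quotient.mk (annId a) x, Ideal.Quotient.mk (annId a) z,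
        (hmk x z).2 hxz, (hmk z x).2 hzx⟩, ?_⟩
      simp only [F]
      ext
      simp only [Units.val_mk]
      rw [hφ, hx, mul_comm]
  exact (Nat.card_eq_of_bijective F hbij).symm
end

section
/- Suppose β(x) = 1/|R| for all x ∈ R. Then the set of nonzero roots of the characteristic polynomial of B_R (regarded as a complex matrix) is exactly {|F_a|/|R| : a ∈ R}. In particular, every eigenvalue of B_R is a rational number. -/
open Finset Polynomial

open scoped Classical

section Aux

variable {R : Type} [CommRing R] [Fintype R]

/-- The "orbit" `aR` as a finset. -/
noncomputable def orb (a : R) : Finset R := Finset.univ.image (a * ·)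

lemma mem_orb {a b : R} : b ∈ orb a ↔ ∃ x, a * x = b := by
  simp [orb]

lemma self_mem_orb (a : R) : a ∈ orb a := mem_orb.2 ⟨1, mul_one a⟩

lemma orb_card_pos (a : R) : 0 < (orb a).card :=
  Finset.card_pos.2 ⟨a, self_mem_orb a⟩

lemma orb_subset_orb {a b : R} (h : b ∈ orb a) : orb b ⊆ orb a := by
  obtain ⟨x, rfl⟩ := mem_orb.1 h
  intro c hc
  obtain ⟨y, rfl⟩ := mem_orb.1 hc
  exact mem_orb.2 ⟨x * y, (mul_assoc a x y).symm⟩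

/-- Number of generators of `aR`. -/
noncomputable def genCard (a : R) : ℕ :=
  (Finset.univ.filter fun b => orb b = orb a).card

/-- Cardinality of the annihilator of `a`. -/
noncomputable def annCard (a : R) : ℕ :=
  (Finset.univ.filter fun x : R => a * x = 0).card

lemma genCard_pos (a : R) : 0 < genCard a :=
  Finset.card_pos.2 ⟨a, by simp⟩

lemma annCard_pos (a : R) : 0 < annCard a :=
  Finset.card_pos.2 ⟨0, by simp⟩

lemma genCard_congr {a b : R} (h : orb a = orb b) : genCard a = genCard b := by
  unfold genCard; rw [h]

lemma fiber_card {a b : R} (h : b ∈ orb a) :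
    (Finset.univ.filter fun x => a * x = b).card = annCard a := by
  obtain ⟨x₀, rfl⟩ := mem_orb.1 h
  unfold annCard
  apply Finset.card_nbij' (fun x => x - x₀) (fun x => x + x₀)
  · intro x hx
    simp only [Finset.mem_coe, Finset.mem_filter, Finset.mem_univ, true_and] at hx ⊢
    rw [mul_sub, hx, sub_self]
  · intro x hx
    simp only [Finset.mem_coe, Finset.mem_filter, Finset.mem_univ, true_and] at hx ⊢
    rw [mul_add, hx, zero_add]
  · intro x _; ring
  · intro x _; ring

lemma card_fintype_eq (a : R) : Fintype.card R = (orb a).card * annCard a := by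
  have h := Finset.card_eq_sum_card_fiberwise
    (s := (Finset.univ : Finset R)) (t := orb a) (f := fun x => a * x)
    (fun x _ => mem_orb.2 ⟨x, rfl⟩)
  rw [Finset.card_univ] at h
  rw [h, Finset.sum_congr rfl (fun b hb => fiber_card hb), Finset.sum_const, smul_eq_mul]

lemma annCard_congr {a b : R} (h : orb a = orb b) : annCard a = annCard b := by
  have h1 := card_fintype_eq a
  have h2 := card_fintype_eq b
  rw [h] at h1
  exact Nat.eq_of_mul_eq_mul_left (orb_card_pos b) (h1 ▸ h2 ▸ rfl)

lemma isUnit_iff_orb {a x : R} :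
    IsUnit (Ideal.Quotient.mk (annId a) x) ↔ orb (a * x) = orb a := by
  constructor
  · intro h
    obtain ⟨c, hc⟩ := isUnit_iff_exists_inv.1 h
    obtain ⟨y, rfl⟩ := Ideal.Quotient.mk_surjective c
    rw [← map_mul, ← map_one (Ideal.Quotient.mk (annId a)),
      Ideal.Quotient.mk_eq_mk_iff_sub_mem] at hc
    have hc' : (x * y - 1) * a = 0 := hc
    have key : a * x * y = a := by
      have : x * y * a - a = 0 := by rw [← hc']; ring
      have := sub_eq_zero.1 this
      calc a * x * y = x * y * a := by ring
      _ = a := this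
    apply Finset.Subset.antisymm (orb_subset_orb (mem_orb.2 ⟨x, rfl⟩))
    exact orb_subset_orb (mem_orb.2 ⟨y, key⟩)
  · intro h
    have : a ∈ orb (a * x) := h ▸ self_mem_orb a
    obtain ⟨y, hy⟩ := mem_orb.1 this
    apply isUnit_iff_exists_inv.2 ⟨Ideal.Quotient.mk (annId a) y, ?_⟩
    rw [← map_mul, ← map_one (Ideal.Quotient.mk (annId a)),
      Ideal.Quotient.mk_eq_mk_iff_sub_mem]
    show (x * y - 1) * a = 0
    have : x * y * a - a = 0 := by
      rw [sub_eq_zero]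
      calc x * y * a = a * x * y := by ring
      _ = a := hy
    calc (x * y - 1) * a = x * y * a - a := by ring
    _ = 0 := this

lemma Fcard_eq (a : R) :
    (Finset.univ.filter fun x => IsUnit (Ideal.Quotient.mk (annId a) x)).card
      = genCard a * annCard a := by
  have h1 : (Finset.univ.filter fun x => IsUnit (Ideal.Quotient.mk (annId a) x))
      = (Finset.univ.filter fun x => orb (a * x) = orb a) := by
    apply Finset.filter_congr
    intro x _
    exact isUnit_iff_orb
  rw [h1]
  have h2 := Finset.card_eq_sum_card_fiberwise
    (s := Finset.univ.filter fun x => orb (a * x) = orb a)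
    (t := Finset.univ.filter fun b => orb b = orb a) (f := fun x => a * x)
    (by intro x hx
        simp only [Finset.mem_coe, Finset.mem_filter, Finset.mem_univ, true_and] at hx ⊢
        exact hx)
  rw [h2]
  unfold genCard
  rw [Finset.sum_congr rfl (fun b hb => ?_), Finset.sum_const, smul_eq_mul]
  have hb' : orb b = orb a := by
    simpa using (Finset.mem_filter.1 hb).2
  have hfib : ((Finset.univ.filter fun x => orb (a * x) = orb a).filter
      fun x => a * x = b) = Finset.univ.filter fun x => a * x = b := by
    ext x
    simp only [Finset.mem_filter, Finset.mem_univ, true_and]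
    constructor
    · rintro ⟨_, h⟩; exact h
    · intro h; exact ⟨by rw [h, hb'], h⟩
  rw [hfib, fiber_card]
  rw [← hb']
  exact self_mem_orb b

/-- Grouping a full sum over `x ↦ v (c * x)` along the orbit. -/
lemma sum_mul_eq (v : R → ℂ) (c : R) :
    ∑ x : R, v (c * x) = (annCard c : ℂ) * ∑ b ∈ orb c, v b := by
  rw [← Finset.sum_fiberwise_of_maps_to (g := fun x => c * x) (t := orb c)
    (fun x _ => mem_orb.2 ⟨x, rfl⟩) (fun x => v (c * x))]
  rw [Finset.mul_sum]
  apply Finset.sum_congr rfl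
  intro b hb
  have : ∀ x ∈ Finset.univ.filter fun x => c * x = b, v (c * x) = v b := by
    intro x hx
    rw [(Finset.mem_filter.1 hx).2]
  rw [Finset.sum_congr rfl this, Finset.sum_const, fiber_card hb, nsmul_eq_mul]

end Aux

section Eigen

variable {R : Type} [CommRing R] [Fintype R]

/-- Fuelled recursion building an eigenvector candidate supported on
orbits containing `I0`. -/
noncomputable def hfun (μ : ℂ) (I0 : Finset R) : ℕ → R → ℂ
  | 0 => fun _ => 0
  | (m + 1) => fun c =>
      if orb c = I0 then 1
      else if I0 ⊆ orb c then
        (μ * ((orb c).card : ℂ) - (genCard c : ℂ))⁻¹ *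
          ∑ b ∈ (orb c).filter (fun b => ¬ orb b = orb c), hfun μ I0 m b
      else 0

lemma hfun_congr (μ : ℂ) (I0 : Finset R) :
    ∀ (m m' : ℕ) (c : R), (orb c).card ≤ m → (orb c).card ≤ m' →
      hfun μ I0 m c = hfun μ I0 m' c := by
  intro m
  induction m with
  | zero =>
    intro m' c hc _
    have := orb_card_pos c
    omega
  | succ m IH =>
    intro m' c hc hc'
    cases m' with
    | zero => have := orb_card_pos c; omega
    | succ m'' =>
      show hfun μ I0 (m + 1) c = hfun μ I0 (m'' + 1) c
      simp only [hfun]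
      split_ifs with h1 h2
      · rfl
      · congr 1
        apply Finset.sum_congr rfl
        intro b hb
        obtain ⟨hb1, hb2⟩ := Finset.mem_filter.1 hb
        have hlt : (orb b).card < (orb c).card :=
          Finset.card_lt_card ((orb_subset_orb hb1).ssubset_of_ne hb2)
        exact IH m'' b (by omega) (by omega)
      · rfl

/-- The eigenvector candidate. -/
noncomputable def vfun (μ : ℂ) (I0 : Finset R) (c : R) : ℂ :=
  hfun μ I0 (Fintype.card R) c

lemma vfun_eq (μ : ℂ) (I0 : Finset R) (c : R) :
    vfun μ I0 c = if orb c = I0 then 1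
      else if I0 ⊆ orb c then
        (μ * ((orb c).card : ℂ) - (genCard c : ℂ))⁻¹ *
          ∑ b ∈ (orb c).filter (fun b => ¬ orb b = orb c), vfun μ I0 b
      else 0 := by
  obtain ⟨m, hm⟩ : ∃ m, Fintype.card R = m + 1 :=
    ⟨_, (Nat.succ_pred_eq_of_pos Fintype.card_pos).symm⟩
  have hcard : ∀ c : R, (orb c).card ≤ Fintype.card R := by
    intro c
    rw [← Finset.card_univ]
    exact Finset.card_le_card (Finset.subset_univ _)
  unfold vfun
  rw [hm]
  show hfun μ I0 (m + 1) c = _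
  simp only [hfun]
  split_ifs with h1 h2
  · rfl
  · congr 1
    apply Finset.sum_congr rfl
    intro b hb
    obtain ⟨hb1, hb2⟩ := Finset.mem_filter.1 hb
    have hlt : (orb b).card < (orb c).card :=
      Finset.card_lt_card ((orb_subset_orb hb1).ssubset_of_ne hb2)
    have h1 := hcard c
    exact hfun_congr μ I0 m (m + 1) b (by omega) (by omega)
  · rfl

lemma vfun_orb_congr (μ : ℂ) (I0 : Finset R) {c c' : R} (h : orb c = orb c') :
    vfun μ I0 c = vfun μ I0 c' := by
  rw [vfun_eq μ I0 c, vfun_eq μ I0 c', genCard_congr h, h]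

lemma orb_filter_gen_eq (c : R) :
    (orb c).filter (fun b => orb b = orb c)
      = Finset.univ.filter (fun b => orb b = orb c) := by
  ext b
  simp only [Finset.mem_filter, Finset.mem_univ, true_and]
  constructor
  · rintro ⟨_, h⟩; exact h
  · intro h; exact ⟨h ▸ self_mem_orb b, h⟩

/-- The key identity: `vfun` satisfies the orbit-sum eigen equations. -/
lemma vfun_key (μ : ℂ) (a₀ : R)
    (hμ0 : (genCard a₀ : ℂ) = μ * ((orb a₀).card : ℂ))
    (hne : ∀ c : R, (orb a₀).card < (orb c).card →
      (genCard c : ℂ) ≠ μ * ((orb c).card : ℂ)) (c : R) :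
    ∑ b ∈ orb c, vfun μ (orb a₀) b
      = μ * ((orb c).card : ℂ) * vfun μ (orb a₀) c := by
  set I0 := orb a₀ with hI0
  by_cases hsub : I0 ⊆ orb c
  · by_cases heqI : orb c = I0
    · -- base case : orb c = I0
      have hvc : vfun μ I0 c = 1 := by rw [vfun_eq, if_pos heqI]
      rw [← Finset.sum_filter_add_sum_filter_not (orb c) (fun b => orb b = orb c)]
      have h1 : ∀ b ∈ (orb c).filter (fun b => orb b = orb c), vfun μ I0 b = 1 := by
        intro b hb
        rw [vfun_eq, if_pos ((Finset.mem_filter.1 hb).2.trans heqI)]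
      have h2 : ∀ b ∈ (orb c).filter (fun b => ¬ orb b = orb c), vfun μ I0 b = 0 := by
        intro b hb
        obtain ⟨hb1, hb2⟩ := Finset.mem_filter.1 hb
        have hss : orb b ⊂ orb c := (orb_subset_orb hb1).ssubset_of_ne hb2
        have hA : ¬ orb b = I0 := fun h => hb2 (h.trans heqI.symm)
        have hB : ¬ I0 ⊆ orb b := fun h =>
          hb2 (Finset.Subset.antisymm hss.subset (heqI ▸ h))
        rw [vfun_eq, if_neg hA, if_neg hB]
      rw [Finset.sum_eq_card_nsmul h1, Finset.sum_eq_zero h2, add_zero,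
        orb_filter_gen_eq c, hvc, mul_one]
      show (genCard c) • (1 : ℂ) = _
      rw [nsmul_eq_mul, mul_one, genCard_congr (heqI.trans hI0), hμ0, heqI]
    · -- inductive step : I0 ⊊ orb c
      have hlt : I0.card < (orb c).card :=
        Finset.card_lt_card (hsub.ssubset_of_ne (fun h => heqI h.symm))
      have hD : μ * ((orb c).card : ℂ) - (genCard c : ℂ) ≠ 0 :=
        sub_ne_zero.2 (Ne.symm (hne c hlt))
      have hvc := vfun_eq μ I0 c
      rw [if_neg heqI, if_pos hsub] at hvc
      have hS : ∑ b ∈ (orb c).filter (fun b => ¬ orb b = orb c), vfun μ I0 b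
          = (μ * ((orb c).card : ℂ) - (genCard c : ℂ)) * vfun μ I0 c := by
        rw [hvc, ← mul_assoc, mul_inv_cancel₀ hD, one_mul]
      rw [← Finset.sum_filter_add_sum_filter_not (orb c) (fun b => orb b = orb c)]
      have h1 : ∀ b ∈ (orb c).filter (fun b => orb b = orb c),
          vfun μ I0 b = vfun μ I0 c := by
        intro b hb
        exact vfun_orb_congr μ I0 (Finset.mem_filter.1 hb).2
      rw [Finset.sum_eq_card_nsmul h1, orb_filter_gen_eq c, hS]
      show (genCard c) • vfun μ I0 c + _ = _
      rw [nsmul_eq_mul]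
      ring
  · -- orb c does not contain I0 : everything vanishes
    have hvc : vfun μ I0 c = 0 := by
      rw [vfun_eq, if_neg (fun h => hsub (by rw [h])), if_neg hsub]
    have h0 : ∀ b ∈ orb c, vfun μ I0 b = 0 := by
      intro b hb
      have hbs : ¬ I0 ⊆ orb b := fun h => hsub (h.trans (orb_subset_orb hb))
      rw [vfun_eq, if_neg (fun h => hbs (by rw [h])), if_neg hbs]
    rw [Finset.sum_eq_zero h0, hvc, mul_zero]

end Eigen

section Root

variable {R : Type} [CommRing R] [Fintype R]

lemma isRoot_charpoly_iff (M : Matrix R R ℂ) (μ : ℂ) :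
    M.charpoly.IsRoot μ ↔ ∃ v : R → ℂ, v ≠ 0 ∧ M.mulVec v = μ • v := by
  have h1 : M.charpoly.eval μ = (μ • (1 : Matrix R R ℂ) - M).det := by
    rw [Matrix.charpoly]
    have h := RingHom.map_det (Polynomial.evalRingHom μ) (Matrix.charmatrix M)
    have h2 : (Polynomial.evalRingHom μ).mapMatrix (Matrix.charmatrix M)
        = μ • (1 : Matrix R R ℂ) - M := by
      ext i j
      simp only [RingHom.mapMatrix_apply, Matrix.map_apply, Matrix.charmatrix_apply,
        Matrix.sub_apply, Matrix.smul_apply, Matrix.one_apply, Matrix.diagonal_apply,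
        coe_evalRingHom, eval_sub, eval_C, smul_eq_mul]
      split_ifs <;> simp
    rw [← h2, ← h]
    rfl
  rw [Polynomial.IsRoot, h1, ← Matrix.exists_mulVec_eq_zero_iff]
  have h2 : ∀ v : R → ℂ, (μ • (1 : Matrix R R ℂ) - M).mulVec v
      = μ • v - M.mulVec v := by
    intro v
    rw [Matrix.sub_mulVec, Matrix.smul_mulVec, Matrix.one_mulVec]
  constructor
  · rintro ⟨v, hv, h⟩
    rw [h2 v, sub_eq_zero] at h
    exact ⟨v, hv, h.symm⟩
  · rintro ⟨v, hv, h⟩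
    exact ⟨v, hv, by rw [h2 v, h, sub_self]⟩

lemma mulVec_Bmat (β : R → ℝ) (hβ : ∀ x, β x = 1 / (Fintype.card R : ℝ))
    (v : R → ℂ) (c : R) :
    ((Bmat R β).map (fun t : ℝ => (t : ℂ))).mulVec v c
      = (Fintype.card R : ℂ)⁻¹ * ((annCard c : ℂ) * ∑ b ∈ orb c, v b) := by
  have hent : ∀ b : R, ((Bmat R β c b : ℝ) : ℂ)
      = ((Finset.univ.filter fun x => c * x = b).card : ℂ) * (Fintype.card R : ℂ)⁻¹ := by
    intro b
    unfold Bmat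
    rw [Finset.sum_congr rfl (fun x _ => hβ x), Finset.sum_const, nsmul_eq_mul]
    push_cast
    ring
  have hstep : ((Bmat R β).map (fun t : ℝ => (t : ℂ))).mulVec v c
      = ∑ b : R, ((Finset.univ.filter fun x => c * x = b).card : ℂ)
          * (Fintype.card R : ℂ)⁻¹ * v b := by
    simp only [Matrix.mulVec, Matrix.map_apply, dotProduct]
    simp only [hent]
  rw [hstep, ← sum_mul_eq v c]
  rw [← Finset.sum_fiberwise_of_maps_to (g := fun x => c * x)
    (t := (Finset.univ : Finset R)) (fun x _ => Finset.mem_univ _) (fun x => v (c * x))]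
  rw [Finset.mul_sum]
  apply Finset.sum_congr rfl
  intro b _
  have : ∀ x ∈ Finset.univ.filter fun x => c * x = b, v (c * x) = v b := by
    intro x hx
    rw [(Finset.mem_filter.1 hx).2]
  rw [Finset.sum_congr rfl this, Finset.sum_const, nsmul_eq_mul]
  ring

/-- Any nonzero eigenvalue has the desired form. -/
lemma eigen_ratio {v : R → ℂ} {lam : ℂ} (hlam : lam ≠ 0) (hv : v ≠ 0)
    (heq : ∀ c : R, lam * v c
      = (Fintype.card R : ℂ)⁻¹ * ((annCard c : ℂ) * ∑ b ∈ orb c, v b)) :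
    ∃ a : R, lam = ((genCard a * annCard a : ℕ) : ℂ) / (Fintype.card R : ℂ) := by
  have hS : (Finset.univ.filter fun b : R => v b ≠ 0).Nonempty := by
    obtain ⟨b, hb⟩ := Function.ne_iff.1 hv
    exact ⟨b, by simpa using hb⟩
  obtain ⟨a, haS, hmin⟩ := Finset.exists_min_image _ (fun b => (orb b).card) hS
  have ha : v a ≠ 0 := by simpa using haS
  have hconst : ∀ b : R, orb b = orb a → v b = v a := by
    intro b hb
    apply mul_left_cancel₀ hlam
    rw [heq b, heq a, hb, annCard_congr hb]
  have hzero : ∀ b ∈ orb a, orb b ≠ orb a → v b = 0 := by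
    intro b hb hne
    by_contra hvb
    have hbS : b ∈ Finset.univ.filter fun b : R => v b ≠ 0 := by simpa using hvb
    have hle := hmin b hbS
    exact hne (Finset.eq_of_subset_of_card_le (orb_subset_orb hb) hle)
  have hsum : ∑ b ∈ orb a, v b = (genCard a : ℂ) * v a := by
    rw [← Finset.sum_filter_add_sum_filter_not (orb a) (fun b => orb b = orb a)]
    have h2 : ∀ b ∈ (orb a).filter (fun b => ¬ orb b = orb a), v b = 0 := by
      intro b hb
      obtain ⟨hb1, hb2⟩ := Finset.mem_filter.1 hb
      exact hzero b hb1 hb2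
    have h1 : ∀ b ∈ (orb a).filter (fun b => orb b = orb a), v b = v a := by
      intro b hb
      exact hconst b (Finset.mem_filter.1 hb).2
    rw [Finset.sum_eq_card_nsmul h1, Finset.sum_eq_zero h2, add_zero,
      orb_filter_gen_eq a]
    show (genCard a) • v a = _
    rw [nsmul_eq_mul]
  have hn : (Fintype.card R : ℂ) ≠ 0 :=
    Nat.cast_ne_zero.2 Fintype.card_pos.ne'
  refine ⟨a, ?_⟩
  have h3 : lam * v a
      = (((genCard a * annCard a : ℕ) : ℂ) / (Fintype.card R : ℂ)) * v a := by
    rw [heq a, hsum]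
    push_cast
    field_simp
  exact mul_right_cancel₀ ha h3

/-- Every ratio `genCard a / |orb a|` admits an eigenvector. -/
lemma exists_root_vec (a : R) :
    ∃ v : R → ℂ, v ≠ 0 ∧ ∀ c : R,
      (annCard c : ℂ) * ∑ b ∈ orb c, v b
        = ((genCard a : ℂ) / ((orb a).card : ℂ)) * (Fintype.card R : ℂ) * v c := by
  set μ := (genCard a : ℂ) / ((orb a).card : ℂ) with hμ
  have hoa : ((orb a).card : ℂ) ≠ 0 := Nat.cast_ne_zero.2 (orb_card_pos a).ne'
  have hSne : (Finset.univ.filter fun b : R =>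
      (genCard b : ℂ) * ((orb a).card : ℂ)
        = (genCard a : ℂ) * ((orb b).card : ℂ)).Nonempty := ⟨a, by simp⟩
  obtain ⟨a₀, ha₀S, hmax⟩ := Finset.exists_max_image _ (fun b => (orb b).card) hSne
  have ha₀ : (genCard a₀ : ℂ) * ((orb a).card : ℂ)
      = (genCard a : ℂ) * ((orb a₀).card : ℂ) := by simpa using ha₀S
  have hμ0 : (genCard a₀ : ℂ) = μ * ((orb a₀).card : ℂ) := by
    rw [hμ, div_mul_eq_mul_div, eq_div_iff hoa, mul_comm ((genCard a₀ : ℂ)) _,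
      mul_comm ((genCard a : ℂ)) _]
    rw [mul_comm] at ha₀
    linear_combination ha₀
  have hne : ∀ c : R, (orb a₀).card < (orb c).card →
      (genCard c : ℂ) ≠ μ * ((orb c).card : ℂ) := by
    intro c hlt h
    have hc : (genCard c : ℂ) * ((orb a).card : ℂ)
        = (genCard a : ℂ) * ((orb c).card : ℂ) := by
      rw [h, hμ]
      field_simp
      try ring
    have hcS : c ∈ Finset.univ.filter fun b : R =>
        (genCard b : ℂ) * ((orb a).card : ℂ)
          = (genCard a : ℂ) * ((orb b).card : ℂ) := by simpa using hc
    have := hmax c hcS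
    omega
  refine ⟨vfun μ (orb a₀), ?_, ?_⟩
  · have h1 : vfun μ (orb a₀) a₀ = 1 := by rw [vfun_eq, if_pos rfl]
    intro h
    rw [funext_iff] at h
    have := h a₀
    rw [h1] at this
    exact one_ne_zero this
  · intro c
    rw [vfun_key μ a₀ hμ0 hne c]
    have hcard : ((orb c).card : ℂ) * (annCard c : ℂ) = (Fintype.card R : ℂ) := by
      have := card_fintype_eq (R := R) c
      push_cast [this]
      ring
    rw [← hcard]
    ring

end Root

/-- With uniform multiplication probabilities, the nonzero eigenvalues of `B_R`
are exactly the numbers `|F_a|/|R|` for `a ∈ R`; in particular every eigenvalue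
is rational. -/
theorem stmt7 (R : Type) [CommRing R] [Fintype R]
    (β : R → ℝ) (hβ : ∀ x, β x = 1 / (Fintype.card R : ℝ)) :
    ({lam : ℂ | lam ≠ 0 ∧
        (((Bmat R β).map (fun t : ℝ => (t : ℂ))).charpoly).IsRoot lam} =
      {lam : ℂ | ∃ a : R, lam =
        ((Finset.univ.filter
            (fun x => IsUnit (Ideal.Quotient.mk (annId a) x))).card : ℂ) /
          (Fintype.card R : ℂ)}) ∧
    ∀ lam : ℂ, (((Bmat R β).map (fun t : ℝ => (t : ℂ))).charpoly).IsRoot lam →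
      ∃ q : ℚ, lam = (q : ℂ) := by
  have hn : (Fintype.card R : ℂ) ≠ 0 := Nat.cast_ne_zero.2 Fintype.card_pos.ne'
  have hset : ({lam : ℂ | lam ≠ 0 ∧
      (((Bmat R β).map (fun t : ℝ => (t : ℂ))).charpoly).IsRoot lam} =
      {lam : ℂ | ∃ a : R, lam =
        ((Finset.univ.filter
            (fun x => IsUnit (Ideal.Quotient.mk (annId a) x))).card : ℂ) /
          (Fintype.card R : ℂ)}) := by
    ext lam
    simp only [Set.mem_setOf_eq]
    constructor
    · rintro ⟨hlam, hroot⟩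
      obtain ⟨v, hv, heig⟩ := (isRoot_charpoly_iff _ lam).1 hroot
      have heq : ∀ c : R, lam * v c
          = (Fintype.card R : ℂ)⁻¹ * ((annCard c : ℂ) * ∑ b ∈ orb c, v b) := by
        intro c
        rw [← mulVec_Bmat β hβ v c, heig]
        simp
      obtain ⟨a, hla⟩ := eigen_ratio hlam hv heq
      exact ⟨a, by rw [hla, Fcard_eq a]⟩
    · rintro ⟨a, rfl⟩
      rw [Fcard_eq a]
      have hnum : ((genCard a * annCard a : ℕ) : ℂ) ≠ 0 :=
        Nat.cast_ne_zero.2 (Nat.mul_ne_zero (genCard_pos a).ne' (annCard_pos a).ne')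
      refine ⟨div_ne_zero hnum hn, ?_⟩
      obtain ⟨v, hv, hkey⟩ := exists_root_vec a
      apply (isRoot_charpoly_iff _ _).2
      refine ⟨v, hv, ?_⟩
      have hμeq : ((genCard a * annCard a : ℕ) : ℂ) / (Fintype.card R : ℂ)
          = (genCard a : ℂ) / ((orb a).card : ℂ) := by
        have hcard : ((orb a).card : ℂ) * (annCard a : ℂ) = (Fintype.card R : ℂ) := by
          have := card_fintype_eq (R := R) a
          push_cast [this]
          ring
        have hoa : ((orb a).card : ℂ) ≠ 0 := Nat.cast_ne_zero.2 (orb_card_pos a).ne'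
        have han : ((annCard a : ℕ) : ℂ) ≠ 0 := Nat.cast_ne_zero.2 (annCard_pos a).ne'
        rw [← hcard]
        push_cast
        field_simp
      funext c
      rw [mulVec_Bmat β hβ v c, hkey c, hμeq]
      simp only [Pi.smul_apply, smul_eq_mul]
      rw [show (Fintype.card R : ℂ)⁻¹ *
          ((genCard a : ℂ) / ((orb a).card : ℂ) * (Fintype.card R : ℂ) * v c)
          = ((genCard a : ℂ) / ((orb a).card : ℂ)) * v c *
            ((Fintype.card R : ℂ)⁻¹ * (Fintype.card R : ℂ)) from by ring,
        inv_mul_cancel₀ hn, mul_one]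
  refine ⟨hset, ?_⟩
  intro lam hroot
  by_cases hlam : lam = 0
  · exact ⟨0, by simp [hlam]⟩
  · have : lam ∈ {lam : ℂ | lam ≠ 0 ∧
        (((Bmat R β).map (fun t : ℝ => (t : ℂ))).charpoly).IsRoot lam} := ⟨hlam, hroot⟩
    rw [hset] at this
    obtain ⟨a, ha⟩ := this
    refine ⟨((Finset.univ.filter
        (fun x => IsUnit (Ideal.Quotient.mk (annId a) x))).card : ℚ)
          / (Fintype.card R : ℚ), ?_⟩
    rw [ha]
    push_cast
    ring
end

section
/- Suppose β(x) = 1/|R| for all x ∈ R. Then the multiplicity of 0 as a root of the characteristic polynomial of B_R equals |R| minus the number of distinct principal ideals of R; equivalently, the number of nonzero eigenvalues of B_R counted with algebraic multiplicity equals the number of distinct principal ideals of R. -/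
open Finset Polynomial

open scoped Classical

lemma charpoly_swap {m k F : Type} [Fintype m] [Fintype k] [DecidableEq m] [DecidableEq k]
    [Field F] (P : Matrix m k F) (A : Matrix k m F) :
    (P * A).charpoly * X ^ Fintype.card k = (A * P).charpoly * X ^ Fintype.card m := by
  set K := FractionRing F[X]
  apply IsFractionRing.injective F[X] K
  set φ : F[X] →+* K := algebraMap F[X] K with hφ
  set ψ : F →+* K := φ.comp Polynomial.C with hψ
  set x : K := φ X with hx
  have hx0 : x ≠ 0 := by
    intro h
    have : (X : F[X]) = 0 := IsFractionRing.injective F[X] K (by rw [map_zero]; exact h)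
    exact X_ne_zero this
  have hchar : ∀ {j : Type} [Fintype j] [DecidableEq j] (M : Matrix j j F),
      φ M.charpoly = (x • (1 : Matrix j j K) - M.map ψ).det := by
    intro j _ _ M
    rw [Matrix.charpoly, RingHom.map_det]
    congr 1
    ext i j'
    by_cases h : i = j' <;>
      simp [h, Matrix.charmatrix_apply, Matrix.map_apply, Matrix.one_apply, hψ,
        Matrix.diagonal_apply, Matrix.smul_apply, ← hx]
  have hdet : ∀ {j : Type} [Fintype j] [DecidableEq j] (M : Matrix j j K),
      (x • (1 : Matrix j j K) - M).det = x ^ Fintype.card j * (1 - x⁻¹ • M).det := by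
    intro j _ _ M
    rw [show x • (1 : Matrix j j K) - M = x • ((1 : Matrix j j K) - x⁻¹ • M) by
      rw [smul_sub, smul_smul, mul_inv_cancel₀ hx0, one_smul], Matrix.det_smul]
  have hmap : ∀ {a b : Type} [Fintype a] [Fintype b] (M : Matrix a b F) (N : Matrix b a F),
      (M * N).map ψ = M.map ψ * N.map ψ := by
    intro a b _ _ M N
    ext i j
    simp [Matrix.map_apply, Matrix.mul_apply]
  rw [map_mul, map_mul, map_pow, map_pow, hchar, hchar, ← hx, hdet, hdet, hmap, hmap]
  have hcomm : ((1 : Matrix m m K) - x⁻¹ • (P.map ψ * A.map ψ)).det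
      = ((1 : Matrix k k K) - x⁻¹ • (A.map ψ * P.map ψ)).det := by
    rw [← Matrix.smul_mul, ← Matrix.mul_smul, Matrix.det_one_sub_mul_comm]
  rw [hcomm]
  ring

/-- With uniform multiplication probabilities, the multiplicity of `0` as a root
of the characteristic polynomial of `B_R` equals `|R|` minus the number of
distinct principal ideals of `R`. -/
theorem stmt8 (R : Type) [CommRing R] [Fintype R]
    (β : R → ℝ) (hβ : ∀ x, β x = 1 / (Fintype.card R : ℝ)) :
    (((Bmat R β).map (fun t : ℝ => (t : ℂ))).charpoly).rootMultiplicity 0 =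
      Fintype.card R -
        Nat.card {I : Ideal R // ∃ a : R, I = Ideal.span {a}} := by
  classical
  set n := Fintype.card R with hn
  have hn0 : (n : ℂ) ≠ 0 := Nat.cast_ne_zero.2 Fintype.card_ne_zero
  haveI : Finite (Ideal R) :=
    Finite.of_injective (fun I : Ideal R => (I : Set R)) fun I J h => SetLike.ext' h
  letI : Fintype {I : Ideal R // ∃ a : R, I = Ideal.span {a}} := Fintype.ofFinite _
  set k := Fintype.card {I : Ideal R // ∃ a : R, I = Ideal.span {a}} with hk
  set c : Ideal R → ℕ := fun I => (univ.filter fun y => y ∈ I).card with hc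
  have hc0 : ∀ I : Ideal R, c I ≠ 0 := fun I =>
    Finset.card_ne_zero_of_mem (mem_filter.2 ⟨mem_univ 0, I.zero_mem⟩)
  -- counting lemma
  have hcount : ∀ a b : R,
      (univ.filter fun x => a * x = b).card * c (Ideal.span {a}) =
        if b ∈ Ideal.span {a} then n else 0 := by
    intro a b
    by_cases hb : b ∈ Ideal.span {a}
    · rw [if_pos hb]
      have hfib : ∀ b1 b2 : R, b1 ∈ Ideal.span {a} → b2 ∈ Ideal.span {a} →
          (univ.filter fun x => a * x = b1).card ≤ (univ.filter fun x => a * x = b2).card := by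
        intro b1 b2 hb1 hb2
        obtain ⟨x1, hx1⟩ := Ideal.mem_span_singleton'.mp hb1
        obtain ⟨x2, hx2⟩ := Ideal.mem_span_singleton'.mp hb2
        apply Finset.card_le_card_of_injOn (fun x => x - x1 + x2)
        · intro x hx
          simp only [Finset.mem_coe, mem_filter, mem_univ, true_and] at hx ⊢
          linear_combination hx - hx1 + hx2
        · intro u _ v _ h
          linear_combination h
      have hsum : ∑ b' ∈ univ.filter (fun y => y ∈ Ideal.span {a}),
          (univ.filter fun x => a * x = b').card = n := by
        rw [← Finset.card_eq_sum_card_fiberwise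
          (f := fun x => a * x) (t := univ.filter fun y => y ∈ Ideal.span {a})
          (fun x _ => mem_filter.2 ⟨mem_univ _,
            Ideal.mul_mem_right x _ (Ideal.mem_span_singleton_self a)⟩)]
        exact Finset.card_univ
      have heq : ∑ b' ∈ univ.filter (fun y => y ∈ Ideal.span {a}),
          (univ.filter fun x => a * x = b').card =
          c (Ideal.span {a}) * (univ.filter fun x => a * x = b).card := by
        rw [Finset.sum_congr rfl (fun b' hb' => le_antisymm
          (hfib b' b (mem_filter.mp hb').2 hb) (hfib b b' hb (mem_filter.mp hb').2)),
          Finset.sum_const, smul_eq_mul]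
      rw [heq] at hsum
      rw [mul_comm]
      exact hsum
    · rw [if_neg hb]
      have : (univ.filter fun x => a * x = b) = ∅ :=
        Finset.filter_eq_empty_iff.mpr fun {x} _ hax =>
          hb (hax ▸ Ideal.mul_mem_right x _ (Ideal.mem_span_singleton_self a))
      rw [this]
      simp
  -- the factor matrices
  set P : Matrix R {I : Ideal R // ∃ a : R, I = Ideal.span {a}} ℂ :=
    fun a I => if Ideal.span {a} = I.1 then 1 else 0 with hP
  set A : Matrix {I : Ideal R // ∃ a : R, I = Ideal.span {a}} R ℂ :=
    fun I b => if b ∈ I.1 then ((c I.1 : ℂ))⁻¹ else 0 with hA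
  have hB : (Bmat R β).map (fun t : ℝ => (t : ℂ)) = P * A := by
    ext a b
    rw [Matrix.map_apply, Matrix.mul_apply]
    have hPA : ∑ I, P a I * A I b = A ⟨Ideal.span {a}, ⟨a, rfl⟩⟩ b := by
      rw [Fintype.sum_eq_single (⟨Ideal.span {a}, ⟨a, rfl⟩⟩ :
        {I : Ideal R // ∃ a : R, I = Ideal.span {a}})]
      · simp [hP]
      · intro I hI
        rw [hP]
        simp only
        rw [if_neg fun h => hI (Subtype.ext h.symm), zero_mul]
    rw [hPA]
    have hBval : Bmat R β a b = (univ.filter fun x => a * x = b).card * (1 / (n : ℝ)) := by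
      rw [Bmat, Finset.sum_congr rfl (fun x _ => hβ x), Finset.sum_const, nsmul_eq_mul]
    rw [hBval, hA]
    simp only
    push_cast
    by_cases hb : b ∈ Ideal.span {a}
    · rw [if_pos hb]
      have hcnt := hcount a b
      rw [if_pos hb] at hcnt
      have hcnt' : ((univ.filter fun x => a * x = b).card : ℂ) * (c (Ideal.span {a}) : ℂ)
          = (n : ℂ) := by exact_mod_cast hcnt
      have hcc : ((c (Ideal.span {a}) : ℂ)) ≠ 0 := Nat.cast_ne_zero.2 (hc0 _)
      field_simp
      linear_combination hcnt'
    · rw [if_neg hb]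
      have hcnt := hcount a b
      rw [if_neg hb] at hcnt
      have : (univ.filter fun x => a * x = b).card = 0 := by
        rcases Nat.mul_eq_zero.mp hcnt with h | h
        · exact h
        · exact absurd h (hc0 _)
      rw [this]
      simp
  -- entries of A * P
  have hN : ∀ I J, (A * P) I J =
      (c I.1 : ℂ)⁻¹ * ((univ.filter fun b => b ∈ I.1 ∧ Ideal.span {b} = J.1).card) := by
    intro I J
    rw [Matrix.mul_apply]
    have : ∀ b : R, A I b * P b J =
        if b ∈ I.1 ∧ Ideal.span {b} = J.1 then (c I.1 : ℂ)⁻¹ else 0 := by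
      intro b
      rw [hA, hP]
      by_cases h1 : b ∈ I.1 <;> by_cases h2 : Ideal.span {b} = J.1 <;> simp [h1, h2]
    rw [Finset.sum_congr rfl fun b _ => this b, ← Finset.sum_filter, Finset.sum_const,
      nsmul_eq_mul]
    ring
  have htri : ∀ I J, ¬ J.1 ≤ I.1 → (A * P) I J = 0 := by
    intro I J hJI
    rw [hN]
    have : (univ.filter fun b => b ∈ I.1 ∧ Ideal.span {b} = J.1) = ∅ :=
      Finset.filter_eq_empty_iff.mpr fun {b} _ hb =>
        hJI (hb.2 ▸ (Ideal.span_singleton_le_iff_mem I.1).mpr hb.1)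
    rw [this]
    simp
  have hdiag : ∀ I, (A * P) I I ≠ 0 := by
    intro I
    obtain ⟨a, ha⟩ := I.2
    rw [hN]
    have hmem : a ∈ univ.filter fun b => b ∈ I.1 ∧ Ideal.span {b} = I.1 :=
      mem_filter.2 ⟨mem_univ _, ⟨ha ▸ Ideal.mem_span_singleton_self a, ha.symm⟩⟩
    exact mul_ne_zero (inv_ne_zero (Nat.cast_ne_zero.2 (hc0 _)))
      (Nat.cast_ne_zero.2 (Finset.card_ne_zero_of_mem hmem))
  -- card monotonicity
  have hcard_mono : ∀ I J : Ideal R, J ≤ I → c J ≤ c I := fun I J h =>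
    Finset.card_le_card fun b hb => mem_filter.2 ⟨mem_univ _, h (mem_filter.mp hb).2⟩
  have hcard_eq : ∀ I J : Ideal R, J ≤ I → c J = c I → J = I := by
    intro I J hle hcardeq
    have hsub : (univ.filter fun y => y ∈ J) ⊆ (univ.filter fun y => y ∈ I) :=
      fun b hb => mem_filter.2 ⟨mem_univ _, hle (mem_filter.mp hb).2⟩
    have := Finset.eq_of_subset_of_card_le hsub (le_of_eq hcardeq.symm)
    ext b
    constructor
    · exact fun hb => hle hb
    · intro hb
      have : b ∈ univ.filter fun y => y ∈ J := this ▸ mem_filter.2 ⟨mem_univ _, hb⟩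
      exact (mem_filter.mp this).2
  -- det (A * P) ≠ 0 via block-triangularity w.r.t. card, dual order
  have hBT : (A * P).BlockTriangular (fun I => OrderDual.toDual (c I.1)) := by
    intro I J h
    apply htri
    intro hle
    exact absurd (hcard_mono _ _ hle) (not_le.mpr h)
  have hdet : (A * P).det ≠ 0 := by
    rw [hBT.det]
    apply Finset.prod_ne_zero_iff.mpr
    intro a _
    have hblock : (A * P).toSquareBlock (fun I => OrderDual.toDual (c I.1)) a =
        Matrix.diagonal (fun i => (A * P) i.1 i.1) := by
      ext i j
      by_cases hij : i = j
      · subst hij; simp [Matrix.toSquareBlock_def]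
      · rw [Matrix.diagonal_apply_ne _ hij, Matrix.toSquareBlock_def]
        apply htri
        intro hle
        have hceq : c j.1.1 = c i.1.1 := by
          have := i.2; have hj2 := j.2
          have : OrderDual.toDual (c i.1.1) = OrderDual.toDual (c j.1.1) := by
            rw [i.2, j.2]
          exact (OrderDual.toDual_inj.mp this).symm
        exact hij (Subtype.ext (Subtype.ext (hcard_eq _ _ hle hceq).symm))
    rw [hblock, Matrix.det_diagonal]
    exact Finset.prod_ne_zero_iff.mpr fun i _ => hdiag i.1
  -- assemble
  have hswap := charpoly_swap P A
  have hPA0 : (P * A).charpoly ≠ 0 := (Matrix.charpoly_monic _).ne_zero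
  have hAP0 : (A * P).charpoly ≠ 0 := (Matrix.charpoly_monic _).ne_zero
  have hXk : ((X : ℂ[X]) ^ k) ≠ 0 := pow_ne_zero _ X_ne_zero
  have hXn : ((X : ℂ[X]) ^ n) ≠ 0 := pow_ne_zero _ X_ne_zero
  have hrmXk : rootMultiplicity 0 ((X : ℂ[X]) ^ k) = k := by
    rw [show ((X : ℂ[X]) ^ k) = ((X : ℂ[X]) - Polynomial.C 0) ^ k by simp]
    exact rootMultiplicity_X_sub_C_pow 0 k
  have hrmXn : rootMultiplicity 0 ((X : ℂ[X]) ^ n) = n := by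
    rw [show ((X : ℂ[X]) ^ n) = ((X : ℂ[X]) - Polynomial.C 0) ^ n by simp]
    exact rootMultiplicity_X_sub_C_pow 0 n
  have hrmAP : rootMultiplicity 0 (A * P).charpoly = 0 := by
    apply rootMultiplicity_eq_zero
    intro hroot
    apply hdet
    rw [Matrix.det_eq_sign_charpoly_coeff, coeff_zero_eq_eval_zero, hroot, mul_zero]
  have heq : rootMultiplicity 0 (P * A).charpoly + k = 0 + n := by
    rw [← hrmAP, ← hrmXk, ← hrmXn, ← rootMultiplicity_mul (mul_ne_zero hPA0 hXk),
      ← rootMultiplicity_mul (mul_ne_zero hAP0 hXn), hswap]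
  rw [hB, Nat.card_eq_fintype_card]
  omega
end

section
/- Let m = p_1^{e_1}·p_2^{e_2}···p_r^{e_r} where p_1 < p_2 < ... < p_r are distinct primes and each e_i ≥ 1, let R = ℤ/mℤ, and suppose β(x) = 1/m for all x ∈ R. Then a complex number λ is a nonzero root of the characteristic polynomial of B_R if and only if there exists a subset T ⊆ {1,…,r} such that λ = ∏_{i∈T}(1 − 1/p_i), where the empty product (T = ∅) is 1. -/
open Finset Polynomial

open scoped Classical

set_option linter.unusedSectionVars false

section count
variable (m : ℕ) [NeZero m]

lemma val_natCast_eq_self {k : ℕ} (h : k < m) : ((k : ZMod m)).val = k := by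
  rw [ZMod.val_natCast, Nat.mod_eq_of_lt h]

lemma natCast_val_eq_self (x : ZMod m) : ((x.val : ℕ) : ZMod m) = x := by
  exact ZMod.natCast_rightInverse x

-- card of {x : ZMod m | k ∣ x.val} = m / k for k ∣ m
lemma card_dvd_val {k : ℕ} (hk : k ∣ m) :
    (univ.filter (fun x : ZMod m => k ∣ x.val)).card = m / k := by
  have hm : 0 < m := Nat.pos_of_ne_zero (NeZero.ne m)
  have hk0 : 0 < k := Nat.pos_of_dvd_of_pos hk hm
  rw [← Finset.card_range (m / k)]
  apply Finset.card_bij' (fun x _ => x.val / k) (fun j _ => ((k * j : ℕ) : ZMod m))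
  · intro x hx
    simp only [mem_filter, mem_univ, true_and] at hx
    simp only [mem_range]
    have := ZMod.val_lt x
    exact Nat.div_lt_div_of_lt_of_dvd hk (by omega)
  · intro j hj
    simp only [mem_range] at hj
    have hlt : k * j < m := by
      calc k * j < k * (m / k) := (Nat.mul_lt_mul_left hk0).mpr hj
      _ = m := Nat.mul_div_cancel' hk
    simp only [mem_filter, mem_univ, true_and]
    rw [val_natCast_eq_self m hlt]
    exact Dvd.intro j rfl
  · intro x hx
    simp only [mem_filter, mem_univ, true_and] at hx
    obtain ⟨j, hj⟩ := hx
    rw [hj, Nat.mul_div_cancel_left j hk0, ← hj, natCast_val_eq_self]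
  · intro j hj
    simp only [mem_range] at hj
    have hlt : k * j < m := by
      calc k * j < k * (m / k) := (Nat.mul_lt_mul_left hk0).mpr hj
      _ = m := Nat.mul_div_cancel' hk
    rw [val_natCast_eq_self m hlt, Nat.mul_div_cancel_left j hk0]



lemma mul_eq_zero_iff (a x : ZMod m) :
    a * x = 0 ↔ (m / Nat.gcd a.val m) ∣ x.val := by
  have hm : 0 < m := Nat.pos_of_ne_zero (NeZero.ne m)
  set g := Nat.gcd a.val m with hgdef
  have hg : 0 < g := Nat.gcd_pos_of_pos_right _ hm
  have h1 : a * x = ((a.val * x.val : ℕ) : ZMod m) := by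
    push_cast [ZMod.natCast_val, ZMod.cast_id]; ring
  rw [h1, ZMod.natCast_eq_zero_iff]
  constructor
  · intro h
    have h2 : g * (m / g) ∣ g * ((a.val / g) * x.val) := by
      rw [Nat.mul_div_cancel' (Nat.gcd_dvd_right _ _), ← mul_assoc,
        Nat.mul_div_cancel' (Nat.gcd_dvd_left _ _)]
      exact h
    have h3 : (m / g) ∣ (a.val / g) * x.val := (Nat.mul_dvd_mul_iff_left hg).mp h2
    exact Nat.Coprime.dvd_of_dvd_mul_left
      ((Nat.coprime_div_gcd_div_gcd hg).symm) h3
  · rintro ⟨t, ht⟩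
    have : m ∣ a.val * (m / g) := by
      have : g * (m / g) ∣ a.val * (m / g) :=
        Nat.mul_dvd_mul_right (Nat.gcd_dvd_left _ _) _
      rwa [Nat.mul_div_cancel' (Nat.gcd_dvd_right _ _)] at this
    rw [ht, ← mul_assoc]
    exact Dvd.dvd.mul_right this t

lemma card_mul_eq (a b : ZMod m) {inst : DecidablePred (fun x : ZMod m => a * x = b)} :
    (@Finset.filter (ZMod m) (fun x => a * x = b) inst univ).card
      = if Nat.gcd a.val m ∣ b.val then Nat.gcd a.val m else 0 := by
  have hset : (@Finset.filter (ZMod m) (fun x => a * x = b) inst univ)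
      = univ.filter (fun x : ZMod m => a * x = b) := by
    ext x; simp [Finset.mem_filter]
  rw [hset]
  have hm : 0 < m := Nat.pos_of_ne_zero (NeZero.ne m)
  set g := Nat.gcd a.val m with hgdef
  have hg : 0 < g := Nat.gcd_pos_of_pos_right _ hm
  have hgm : g ∣ m := Nat.gcd_dvd_right _ _
  by_cases hb : g ∣ b.val
  · rw [if_pos hb]
    -- there is a solution x₀
    have hsol : ∃ x₀ : ZMod m, a * x₀ = b := by
      have hbez : ((g : ℤ) : ZMod m) = (a : ZMod m) * ((Nat.gcdA a.val m : ℤ) : ZMod m) := by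
        have := Nat.gcd_eq_gcd_ab a.val m
        have h2 : (((a.val : ℤ) * Nat.gcdA a.val m + (m : ℤ) * Nat.gcdB a.val m : ℤ) : ZMod m)
            = ((g : ℤ) : ZMod m) := by rw [← this]
        rw [← h2]
        push_cast [ZMod.natCast_val, ZMod.cast_id, ZMod.natCast_self]
        ring
      refine ⟨((Nat.gcdA a.val m : ℤ) : ZMod m) * ((b.val / g : ℕ) : ZMod m), ?_⟩
      rw [← mul_assoc, ← hbez]
      have : ((g : ℤ) : ZMod m) * ((b.val / g : ℕ) : ZMod m) = ((g * (b.val / g) : ℕ) : ZMod m) := by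
        push_cast; ring
      rw [this, Nat.mul_div_cancel' hb, natCast_val_eq_self]
    obtain ⟨x₀, hx₀⟩ := hsol
    -- bijection with kernel
    have hcard : (univ.filter (fun x : ZMod m => a * x = b)).card
        = (univ.filter (fun x : ZMod m => a * x = 0)).card := by
      apply Finset.card_bij' (fun x _ => x - x₀) (fun y _ => y + x₀)
      · intro x hx
        simp only [mem_filter, mem_univ, true_and] at hx ⊢
        rw [mul_sub, hx, hx₀, sub_self]
      · intro y hy
        simp only [mem_filter, mem_univ, true_and] at hy ⊢
        rw [mul_add, hy, hx₀, zero_add]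
      · intro x _; ring
      · intro y _; ring
    rw [hcard]
    have : (univ.filter (fun x : ZMod m => a * x = 0))
        = (univ.filter (fun x : ZMod m => (m / g) ∣ x.val)) := by
      ext x; simp [mul_eq_zero_iff m a x, hgdef]
    rw [this, card_dvd_val m (Nat.div_dvd_of_dvd hgm), Nat.div_div_self hgm (NeZero.ne m)]
  · rw [if_neg hb]
    rw [Finset.card_eq_zero, Finset.filter_eq_empty_iff]
    intro x _
    intro hax
    apply hb
    have h1 : ((a.val * x.val : ℕ) : ZMod m) = ((b.val : ℕ) : ZMod m) := by
      rw [natCast_val_eq_self]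
      rw [← hax]
      push_cast [ZMod.natCast_val, ZMod.cast_id]; ring
    have h2 : a.val * x.val ≡ b.val [MOD m] := (ZMod.natCast_eq_natCast_iff _ _ _).mp h1
    have h3 : (m : ℤ) ∣ (b.val : ℤ) - (a.val * x.val : ℕ) := h2.dvd
    have h4 : (g : ℤ) ∣ (b.val : ℤ) := by
      have hga : (g : ℤ) ∣ ((a.val * x.val : ℕ) : ℤ) := by
        have : g ∣ a.val * x.val := Dvd.dvd.mul_right (Nat.gcd_dvd_left _ _) _
        exact_mod_cast this
      have hgm' : (g : ℤ) ∣ (m : ℤ) := Int.natCast_dvd_natCast.mpr hgm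
      have := dvd_add (hgm'.trans h3) hga
      simpa using this
    exact_mod_cast h4


end count


section count2
variable (m : ℕ) [NeZero m]

lemma card_gcd_eq {d' : ℕ} (hd' : d' ∣ m) :
    (univ.filter (fun b : ZMod m => Nat.gcd b.val m = d')).card = Nat.totient (m / d') := by
  have hm : 0 < m := Nat.pos_of_ne_zero (NeZero.ne m)
  have hd'0 : 0 < d' := Nat.pos_of_dvd_of_pos hd' hm
  have hmd : d' * (m / d') = m := Nat.mul_div_cancel' hd'
  rw [Nat.totient]
  apply Finset.card_bij' (fun b _ => b.val / d') (fun c _ => ((d' * c : ℕ) : ZMod m))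
  · intro b hb
    simp only [mem_filter, mem_univ, true_and] at hb ⊢
    have hdb : d' ∣ b.val := hb ▸ Nat.gcd_dvd_left _ _
    refine ⟨mem_range.mpr (Nat.div_lt_div_of_lt_of_dvd hd' (ZMod.val_lt b)), ?_⟩
    have h1 : d' * Nat.gcd (b.val / d') (m / d') = d' := by
      rw [← Nat.gcd_mul_left, Nat.mul_div_cancel' hdb, hmd, hb]
    have h2 : Nat.gcd (b.val / d') (m / d') = 1 := by
      nlinarith [Nat.gcd_dvd_left (b.val / d') (m / d')]
    exact Nat.coprime_comm.mp h2
  · intro c hc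
    simp only [mem_filter, mem_univ, true_and, mem_range] at hc ⊢
    obtain ⟨hclt, hcop⟩ := hc
    have hlt : d' * c < m := by
      calc d' * c < d' * (m / d') := (Nat.mul_lt_mul_left hd'0).mpr hclt
      _ = m := hmd
    rw [val_natCast_eq_self m hlt]
    conv_lhs => rw [← hmd]
    rw [Nat.gcd_mul_left, Nat.Coprime.gcd_eq_one (Nat.coprime_comm.mp hcop), mul_one]
  · intro b hb
    simp only [mem_filter, mem_univ, true_and] at hb
    have hdb : d' ∣ b.val := hb ▸ Nat.gcd_dvd_left _ _
    rw [Nat.mul_div_cancel' hdb, natCast_val_eq_self]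
  · intro c hc
    simp only [mem_range, mem_filter] at hc
    have hlt : d' * c < m := by
      calc d' * c < d' * (m / d') := (Nat.mul_lt_mul_left hd'0).mpr hc.1
      _ = m := hmd
    rw [val_natCast_eq_self m hlt, Nat.mul_div_cancel_left c hd'0]

lemma card_dvd_and_gcd_eq {d d' : ℕ} (hd : d ∣ m) (hd' : d' ∣ m) :
    (univ.filter (fun b : ZMod m => d ∣ b.val ∧ Nat.gcd b.val m = d')).card
      = if d ∣ d' then Nat.totient (m / d') else 0 := by
  by_cases hdd : d ∣ d'
  · rw [if_pos hdd, ← card_gcd_eq m hd']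
    congr 1
    ext b
    simp only [mem_filter, mem_univ, true_and, and_iff_right_iff_imp]
    intro hb
    exact hdd.trans (hb ▸ Nat.gcd_dvd_left _ _)
  · rw [if_neg hdd, Finset.card_eq_zero, Finset.filter_eq_empty_iff]
    rintro b - ⟨h1, h2⟩
    exact hdd (h2 ▸ Nat.dvd_gcd h1 hd)

end count2


section eig
variable {n k : Type*} [Fintype n] [DecidableEq n] [Fintype k] [DecidableEq k]

lemma isRoot_charpoly_iff_s9 (N : Matrix n n ℂ) (μ : ℂ) :
    N.charpoly.IsRoot μ ↔ ∃ v, v ≠ 0 ∧ N.mulVec v = μ • v := by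
  have h1 : N.charpoly.eval μ = (μ • (1 : Matrix n n ℂ) - N).det := by
    rw [Matrix.charpoly, ← coe_evalRingHom, RingHom.map_det]
    congr 1
    ext i j
    by_cases hij : i = j <;>
      simp [Matrix.charmatrix, hij, Matrix.one_apply, Matrix.diagonal_apply]
  constructor
  · intro h
    have hdet : (μ • (1 : Matrix n n ℂ) - N).det = 0 := by rw [← h1]; exact h
    obtain ⟨v, hv, hv0⟩ := Matrix.exists_mulVec_eq_zero_iff.mpr hdet
    refine ⟨v, hv, ?_⟩
    rw [Matrix.sub_mulVec, Matrix.smul_mulVec, Matrix.one_mulVec] at hv0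
    have := sub_eq_zero.mp hv0
    exact this.symm
  · rintro ⟨v, hv, hv0⟩
    have : (μ • (1 : Matrix n n ℂ) - N).mulVec v = 0 := by
      rw [Matrix.sub_mulVec, Matrix.smul_mulVec, Matrix.one_mulVec, hv0, sub_self]
    have hdet : (μ • (1 : Matrix n n ℂ) - N).det = 0 :=
      Matrix.exists_mulVec_eq_zero_iff.mp ⟨v, hv, this⟩
    show N.charpoly.eval μ = 0
    rw [h1]; exact hdet

lemma eig_transfer (C : Matrix n k ℂ) (D : Matrix k n ℂ) {μ : ℂ} (hμ : μ ≠ 0)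
    (h : ∃ v, v ≠ 0 ∧ (C * D).mulVec v = μ • v) :
    ∃ w, w ≠ 0 ∧ (D * C).mulVec w = μ • w := by
  obtain ⟨v, hv, hv0⟩ := h
  refine ⟨D.mulVec v, ?_, ?_⟩
  · intro hw
    apply hv
    have : (C * D).mulVec v = 0 := by
      rw [← Matrix.mulVec_mulVec, hw, Matrix.mulVec_zero]
    rw [this] at hv0
    have h2 : μ • v = 0 := hv0.symm
    exact (smul_eq_zero.mp h2).resolve_left hμ
  · rw [← Matrix.mulVec_mulVec]
    have h3 : C.mulVec (D.mulVec v) = μ • v := by rw [Matrix.mulVec_mulVec, hv0]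
    rw [h3, Matrix.mulVec_smul]

end eig


section mats
variable (m : ℕ) [NeZero m]

abbrev Dv := {d : ℕ // d ∈ Nat.divisors m}

def gcdD (a : ZMod m) : Dv m :=
  ⟨Nat.gcd a.val m, Nat.mem_divisors.mpr ⟨Nat.gcd_dvd_right _ _, NeZero.ne m⟩⟩

noncomputable def Cmat : Matrix (ZMod m) (Dv m) ℂ :=
  fun a d => if gcdD m a = d then 1 else 0

noncomputable def Dmat : Matrix (Dv m) (ZMod m) ℂ :=
  fun d b => if (d : ℕ) ∣ b.val then ((d : ℕ) : ℂ) / m else 0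

noncomputable def Mmat : Matrix (Dv m) (Dv m) ℂ :=
  fun d d' => if (d : ℕ) ∣ (d' : ℕ) then ((d : ℕ) : ℂ) / m * (Nat.totient (m / (d' : ℕ)) : ℂ)
    else 0

noncomputable def lamd (d : Dv m) : ℂ :=
  ((d : ℕ) : ℂ) / m * (Nat.totient (m / (d : ℕ)) : ℂ)

lemma DC_eq_M : Dmat m * Cmat m = Mmat m := by
  ext d d'
  have hd : (d : ℕ) ∣ m := (Nat.mem_divisors.mp d.2).1
  have hd' : (d' : ℕ) ∣ m := (Nat.mem_divisors.mp d'.2).1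
  show ∑ b : ZMod m, Dmat m d b * Cmat m b d' = _
  have key : ∀ b : ZMod m, Dmat m d b * Cmat m b d'
      = if ((d:ℕ) ∣ b.val ∧ Nat.gcd b.val m = (d' : ℕ)) then ((d : ℕ) : ℂ) / m else 0 := by
    intro b
    have : (gcdD m b = d') ↔ (Nat.gcd b.val m = (d' : ℕ)) := by
      constructor
      · intro h; exact congrArg Subtype.val h
      · intro h; exact Subtype.ext h
    simp only [Dmat, Cmat, this]
    split_ifs with h1 h2 h3 h4 <;> simp_all
  simp only [key]
  rw [Finset.sum_ite, Finset.sum_const, Finset.sum_const_zero, add_zero]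
  rw [card_dvd_and_gcd_eq m hd hd']
  unfold Mmat
  split_ifs with h
  · rw [nsmul_eq_mul]; ring
  · simp

lemma Mmat_triangular : (Mmat m).BlockTriangular id := by
  intro i j hij
  have hjpos : 0 < (j : ℕ) := Nat.pos_of_mem_divisors j.2
  unfold Mmat
  rw [if_neg]
  intro hdvd
  have : (i : ℕ) ≤ (j : ℕ) := Nat.le_of_dvd hjpos hdvd
  have : (j : ℕ) < (i : ℕ) := hij
  omega

lemma Mmat_charpoly_root_iff (μ : ℂ) :
    (Mmat m).charpoly.IsRoot μ ↔ ∃ d : Dv m, μ = lamd m d := by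
  rw [Matrix.charpoly_of_upperTriangular _ (Mmat_triangular m)]
  have hdiag : ∀ d : Dv m, Mmat m d d = lamd m d := by
    intro d; simp [Mmat, lamd]
  simp only [IsRoot, eval_prod, eval_sub, eval_X, eval_C, Finset.prod_eq_zero_iff]
  constructor
  · rintro ⟨d, -, hd⟩
    exact ⟨d, by rw [← hdiag d]; exact sub_eq_zero.mp hd⟩
  · rintro ⟨d, hd⟩
    exact ⟨d, Finset.mem_univ d, by rw [hdiag d, ← hd, sub_self]⟩

end mats



section fact
variable (m : ℕ) [NeZero m]

lemma A_eq_CD (β : ZMod m → ℝ) (hβ : ∀ x, β x = 1 / (m : ℝ)) :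
    (Bmat (ZMod m) β).map (fun t : ℝ => (t : ℂ)) = Cmat m * Dmat m := by
  ext a b
  have hrhs : (Cmat m * Dmat m) a b = Dmat m (gcdD m a) b := by
    show ∑ d : Dv m, Cmat m a d * Dmat m d b = _
    have key : ∀ d : Dv m, Cmat m a d * Dmat m d b
        = if gcdD m a = d then Dmat m d b else 0 := by
      intro d; simp only [Cmat]; split_ifs <;> simp
    simp only [key]
    rw [Finset.sum_ite_eq, if_pos (Finset.mem_univ _)]
  rw [hrhs]
  simp only [Matrix.map_apply, Bmat]
  simp only [hβ, Finset.sum_const, nsmul_eq_mul]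
  rw [card_mul_eq m a b]
  unfold Dmat gcdD
  split_ifs with h
  · push_cast; ring
  · push_cast; ring

lemma lamd_eq (d : Dv m) :
    lamd m d = ∏ q ∈ (m / (d : ℕ)).primeFactors, (1 - 1 / (q : ℂ)) := by
  have hd : (d : ℕ) ∣ m := (Nat.mem_divisors.mp d.2).1
  have hd0 : 0 < (d : ℕ) := Nat.pos_of_mem_divisors d.2
  set k := m / (d : ℕ) with hk
  have hdk : (d : ℕ) * k = m := Nat.mul_div_cancel' hd
  have hk0 : 0 < k := by
    rcases Nat.eq_zero_or_pos k with h | h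
    · exfalso; rw [h, mul_zero] at hdk; exact NeZero.ne m hdk.symm
    · exact h
  have hq := Nat.totient_eq_mul_prod_factors k
  have hq' : ((Nat.totient k : ℚ) : ℂ) = ((k : ℚ) * ∏ p ∈ k.primeFactors, (1 - (p : ℚ)⁻¹) : ℚ) := by
    exact_mod_cast congrArg (fun x : ℚ => (x : ℂ)) hq
  push_cast at hq'
  unfold lamd
  rw [← hk, hq']
  have hd0' : ((d : ℕ) : ℂ) ≠ 0 := Nat.cast_ne_zero.mpr (by omega)
  have hk0' : ((k : ℕ) : ℂ) ≠ 0 := Nat.cast_ne_zero.mpr (by omega)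
  have hm' : (m : ℂ) = ((d : ℕ) : ℂ) * (k : ℂ) := by exact_mod_cast hdk.symm
  rw [hm']
  have h1 : ((d : ℕ) : ℂ) / (((d : ℕ) : ℂ) * (k : ℂ)) = ((k : ℂ))⁻¹ := by
    field_simp
  rw [h1, inv_mul_cancel_left₀ hk0']
  simp [one_div]

end fact

/-- For `R = ℤ/mℤ` with `m = p₁^{e₁}⋯p_r^{e_r}` and uniform multiplication
probabilities, the nonzero eigenvalues of `B_R` are exactly the products
`∏_{i∈T}(1 − 1/p_i)` over subsets `T ⊆ {1,…,r}`. -/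
theorem stmt9 (r : ℕ) (p e : Fin r → ℕ) (hp : ∀ i, (p i).Prime)
    (hmono : StrictMono p) (he : ∀ i, 1 ≤ e i)
    (m : ℕ) [NeZero m] (hm : m = ∏ i, p i ^ e i)
    (β : ZMod m → ℝ) (hβ : ∀ x, β x = 1 / (m : ℝ)) :
    ∀ lam : ℂ,
      (lam ≠ 0 ∧
        (((Bmat (ZMod m) β).map (fun t : ℝ => (t : ℂ))).charpoly).IsRoot lam) ↔
      ∃ T : Finset (Fin r), lam = ∏ i ∈ T, (1 - 1 / (p i : ℂ)) := by
  intro lam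
  have hA : (Bmat (ZMod m) β).map (fun t : ℝ => (t : ℂ)) = Cmat m * Dmat m := A_eq_CD m β hβ
  have hpinj : Function.Injective p := hmono.injective
  constructor
  · rintro ⟨hne, hroot⟩
    rw [isRoot_charpoly_iff_s9, hA] at hroot
    have h2 := eig_transfer (Cmat m) (Dmat m) hne hroot
    rw [DC_eq_M] at h2
    obtain ⟨d, hd⟩ := (Mmat_charpoly_root_iff m lam).mp ((isRoot_charpoly_iff_s9 _ _).mpr h2)
    rw [lamd_eq] at hd
    set F := (m / (d : ℕ)).primeFactors with hF
    have hFp : ∀ q ∈ F, ∃ i, p i = q := by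
      intro q hq
      obtain ⟨hq1, hq2, -⟩ := Nat.mem_primeFactors.mp hq
      have hqm : q ∣ m := hq2.trans (Nat.div_dvd_of_dvd (Nat.mem_divisors.mp d.2).1)
      rw [hm] at hqm
      obtain ⟨i, -, hqi⟩ := (Nat.Prime.prime hq1).exists_mem_finset_dvd hqm
      exact ⟨i, ((Nat.prime_dvd_prime_iff_eq hq1 (hp i)).mp
        ((Nat.Prime.prime hq1).dvd_of_dvd_pow hqi)).symm⟩
    refine ⟨univ.filter (fun i => p i ∈ F), ?_⟩
    have himg : F = (univ.filter (fun i => p i ∈ F)).image p := by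
      ext q
      simp only [Finset.mem_image, Finset.mem_filter, Finset.mem_univ, true_and]
      constructor
      · intro hq
        obtain ⟨i, hi⟩ := hFp q hq
        exact ⟨i, hi ▸ hq, hi⟩
      · rintro ⟨i, hi, rfl⟩; exact hi
    have hprod : ∏ q ∈ F, (1 - 1 / (q : ℂ))
        = ∏ i ∈ univ.filter (fun i => p i ∈ F), (1 - 1 / (p i : ℂ)) := by
      conv_lhs => rw [himg]
      rw [Finset.prod_image (fun x _ y _ h => hpinj h)]
    exact hd.trans hprod
  · rintro ⟨T, hT⟩
    have hfac : ∀ i : Fin r, (1 - 1 / (p i : ℂ)) ≠ 0 := by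
      intro i h
      have h2 : (2 : ℕ) ≤ p i := (hp i).two_le
      have hpne : ((p i : ℕ) : ℂ) ≠ 0 := Nat.cast_ne_zero.mpr (by omega)
      rw [sub_eq_zero] at h
      have h3 : ((p i : ℕ) : ℂ) = 1 := by
        have h4 : ((p i : ℕ) : ℂ) * 1 = ((p i : ℕ) : ℂ) * (1 / ((p i : ℕ) : ℂ)) := by
          rw [← h]
        rwa [mul_one, mul_one_div, div_self hpne] at h4
      have h5 : (p i : ℕ) = 1 := by exact_mod_cast h3
      omega
    have hne : lam ≠ 0 := by
      rw [hT]
      exact Finset.prod_ne_zero_iff.mpr (fun i _ => hfac i)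
    set k := ∏ i ∈ T, p i with hk
    have hkm : k ∣ m := by
      rw [hm, hk]
      calc ∏ i ∈ T, p i ∣ ∏ i ∈ T, p i ^ e i :=
            Finset.prod_dvd_prod_of_dvd _ _ (fun i _ => by
              conv_lhs => rw [← pow_one (p i)]
              exact pow_dvd_pow (p i) (he i))
        _ ∣ ∏ i, p i ^ e i := Finset.prod_dvd_prod_of_subset _ _ _ (Finset.subset_univ T)
    set d : Dv m := ⟨m / k, Nat.mem_divisors.mpr ⟨Nat.div_dvd_of_dvd hkm, NeZero.ne m⟩⟩ with hdd
    have hmd : m / (d : ℕ) = k := Nat.div_div_self hkm (NeZero.ne m)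
    have hlam : lam = lamd m d := by
      rw [lamd_eq, hmd]
      have hkim : k = ∏ q ∈ T.image p, q := by
        rw [hk]
        exact (Finset.prod_image (g := p) (f := fun q => (q : ℕ)) (fun x _ y _ h => hpinj h)).symm
      have hpf : k.primeFactors = T.image p := by
        rw [hkim]
        exact Nat.primeFactors_prod (fun q hq => by
          obtain ⟨i, -, rfl⟩ := Finset.mem_image.mp hq; exact hp i)
      rw [hpf, Finset.prod_image (fun x _ y _ h => hpinj h), hT]
    refine ⟨hne, ?_⟩
    rw [isRoot_charpoly_iff_s9, hA]
    have h3 := (isRoot_charpoly_iff_s9 (Mmat m) lam).mp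
      ((Mmat_charpoly_root_iff m lam).mpr ⟨d, hlam⟩)
    rw [← DC_eq_M] at h3
    exact eig_transfer (Dmat m) (Cmat m) hne h3
end

section
/- Let m = p_1^{e_1}·p_2^{e_2}···p_r^{e_r} where p_1 < p_2 < ... < p_r are distinct primes and each e_i ≥ 1, let R = ℤ/mℤ, and suppose β(x) = 1/m for all x ∈ R. Then for every subset T ⊆ {1,…,r}, the algebraic multiplicity of ∏_{i∈T}(1 − 1/p_i) as a root of the characteristic polynomial of B_R equals ∏_{i∈T} e_i (both products being 1 when T = ∅). -/
open Finset Polynomial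

open scoped Classical
set_option synthInstance.maxHeartbeats 1000000
set_option maxHeartbeats 1000000

section ZModPart


variable {m : ℕ} [NeZero m]

/-- number of solutions of `a * x = b` in `ZMod m` -/
noncomputable def Nsol (m : ℕ) [NeZero m] (a b : ZMod m) : ℕ :=
  ((Finset.univ : Finset (ZMod m)).filter fun x => a * x = b).card

lemma Nsol_shift (a b x₀ : ZMod m) (h : a * x₀ = b) : Nsol m a b = Nsol m a 0 := by
  apply Finset.card_nbij' (fun x => x - x₀) (fun x => x + x₀)
  · intro x hx
    simp only [Finset.mem_coe, Finset.mem_filter, Finset.mem_univ, true_and] at hx ⊢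
    rw [mul_sub, hx, h, sub_self]
  · intro x hx
    simp only [Finset.mem_coe, Finset.mem_filter, Finset.mem_univ, true_and] at hx ⊢
    rw [mul_add, hx, h, zero_add]
  · intro x _; simp
  · intro x _; simp

lemma Nsol_congr (a c : ZMod m) (hac : ∃ t, a = c * t) (hca : ∃ s, c = a * s) (b : ZMod m) :
    Nsol m a b = Nsol m c b := by
  obtain ⟨t, ht⟩ := hac
  obtain ⟨s, hs⟩ := hca
  by_cases h1 : ∃ x, a * x = b
  · obtain ⟨x, hx⟩ := h1
    have h2 : c * (t * x) = b := by rw [← mul_assoc, ← ht, hx]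
    rw [Nsol_shift a b x hx, Nsol_shift c b (t * x) h2]
    unfold Nsol
    congr 1
    apply Finset.filter_congr
    intro y _
    constructor
    · intro hy
      rw [hs, mul_assoc, mul_comm s y, ← mul_assoc, hy, zero_mul]
    · intro hy
      rw [ht, mul_assoc, mul_comm t y, ← mul_assoc, hy, zero_mul]
  · have h2 : ¬ ∃ x, c * x = b := by
      rintro ⟨x, hx⟩
      exact h1 ⟨s * x, by rw [← mul_assoc, ← hs, hx]⟩
    unfold Nsol
    rw [Finset.filter_false_of_mem (fun x _ hx => h1 ⟨x, hx⟩),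
      Finset.filter_false_of_mem (fun x _ hx => h2 ⟨x, hx⟩)]

lemma gcd_assoc_left (a : ZMod m) : ∃ t, a = (Nat.gcd a.val m : ZMod m) * t := by
  refine ⟨(a.val / Nat.gcd a.val m : ℕ), ?_⟩
  rw [← Nat.cast_mul, Nat.mul_div_cancel' (Nat.gcd_dvd_left _ _)]
  simp [ZMod.natCast_val, ZMod.cast_id]

lemma gcd_assoc_right (a : ZMod m) : ∃ s, (Nat.gcd a.val m : ZMod m) = a * s := by
  refine ⟨((Nat.gcdA a.val m : ℤ) : ZMod m), ?_⟩
  have h := Nat.gcd_eq_gcd_ab a.val m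
  have : ((Nat.gcd a.val m : ℤ) : ZMod m) = ((a.val * Nat.gcdA a.val m + m * Nat.gcdB a.val m : ℤ) : ZMod m) := by
    rw [← h]
  push_cast at this
  rw [ZMod.natCast_self] at this
  simp only [zero_mul, add_zero] at this
  rw [this]
  congr 1
  simp [ZMod.natCast_val, ZMod.cast_id]

lemma mem_range_of_dvd {d : ℕ} (hd : d ∣ m) (a : ZMod m) (h : d ∣ a.val) :
    ∃ x, (d : ZMod m) * x = a := by
  refine ⟨(a.val / d : ℕ), ?_⟩
  rw [← Nat.cast_mul, Nat.mul_div_cancel' h]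
  simp [ZMod.natCast_val, ZMod.cast_id]

lemma dvd_val_of_mem_range {d : ℕ} (hd : d ∣ m) {a x : ZMod m} (h : (d : ZMod m) * x = a) :
    d ∣ a.val := by
  have : a = ((d * x.val : ℕ) : ZMod m) := by
    push_cast
    rw [← h]
    simp [ZMod.natCast_val, ZMod.cast_id]
  rw [this, ZMod.val_natCast]
  exact (Nat.dvd_mod_iff hd).mpr ⟨x.val, rfl⟩

lemma Nsol_ker_card {d : ℕ} (hd : d ∣ m) (hd0 : d ≠ 0) : Nsol m (d : ZMod m) 0 = d := by
  have hm : m ≠ 0 := NeZero.ne m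
  set k := m / d with hk
  have hk0 : k ≠ 0 := (Nat.div_ne_zero_iff_of_dvd hd).mpr ⟨hm, hd0⟩
  have hkpos : 0 < k := Nat.pos_of_ne_zero hk0
  have hdk : d * k = m := Nat.mul_div_cancel' hd
  have hkm : k ∣ m := ⟨d, by rw [← hdk]; ring⟩
  have hcond : ∀ x : ZMod m, ((d : ZMod m) * x = 0 ↔ k ∣ x.val) := by
    intro x
    have h1 : (d : ZMod m) * x = ((d * x.val : ℕ) : ZMod m) := by
      push_cast; simp [ZMod.natCast_val, ZMod.cast_id]
    rw [h1, ZMod.natCast_eq_zero_iff]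
    constructor
    · rintro ⟨c, hc⟩
      refine ⟨c, Nat.eq_of_mul_eq_mul_left (Nat.pos_of_ne_zero hd0) ?_⟩
      rw [hc, ← hdk]; ring
    · rintro ⟨c, hc⟩
      exact ⟨c, by rw [hc, ← hdk]; ring⟩
  unfold Nsol
  rw [show ((Finset.univ : Finset (ZMod m)).filter fun x => (d : ZMod m) * x = 0) =
      ((Finset.univ : Finset (ZMod m)).filter fun x => k ∣ x.val) from
    Finset.filter_congr fun x _ => by simp [hcond x]]
  rw [← Finset.card_range d]
  symm
  apply Finset.card_nbij' (fun j => ((j * k : ℕ) : ZMod m)) (fun x => x.val / k)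
  · intro j hj
    simp only [Finset.mem_coe, Finset.mem_range] at hj
    simp only [Finset.mem_coe, Finset.mem_filter, Finset.mem_univ, true_and]
    rw [ZMod.val_natCast]
    exact (Nat.dvd_mod_iff hkm).mpr ⟨j, mul_comm j k⟩
  · intro x hx
    simp only [Finset.mem_coe, Finset.mem_filter, Finset.mem_univ, true_and] at hx
    simp only [Finset.mem_coe, Finset.mem_range]
    rw [Nat.div_lt_iff_lt_mul hkpos]
    calc x.val < m := x.val_lt
      _ = d * k := hdk.symm
  · intro j hj
    simp only [Finset.mem_coe, Finset.mem_range] at hj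
    have hlt : j * k < m := by
      calc j * k < d * k := (Nat.mul_lt_mul_right hkpos).mpr hj
        _ = m := hdk
    dsimp only
    rw [ZMod.val_natCast, Nat.mod_eq_of_lt hlt, Nat.mul_div_cancel _ hkpos]
  · intro x hx
    simp only [Finset.mem_coe, Finset.mem_filter, Finset.mem_univ, true_and] at hx
    dsimp only
    rw [Nat.div_mul_cancel hx]
    simp [ZMod.natCast_val, ZMod.cast_id]

lemma gcd_count {d : ℕ} (hd : d ∣ m) (hd0 : d ≠ 0) :
    ((Finset.univ : Finset (ZMod m)).filter fun a => Nat.gcd a.val m = d).card =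
      Nat.totient (m / d) := by
  have hm : m ≠ 0 := NeZero.ne m
  set k := m / d with hk
  have hdk : d * k = m := Nat.mul_div_cancel' hd
  have hdpos : 0 < d := Nat.pos_of_ne_zero hd0
  rw [Nat.totient]
  symm
  apply Finset.card_nbij' (fun b => ((d * b : ℕ) : ZMod m)) (fun a => a.val / d)
  · intro b hb
    simp only [Finset.mem_coe, Finset.mem_filter, Finset.mem_range] at hb
    obtain ⟨hb1, hb2⟩ := hb
    simp only [Finset.mem_coe, Finset.mem_filter, Finset.mem_univ, true_and]
    have hlt : d * b < m := by
      calc d * b < d * k := (Nat.mul_lt_mul_left hdpos).mpr hb1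
        _ = m := hdk
    rw [ZMod.val_natCast, Nat.mod_eq_of_lt hlt, ← hdk, Nat.gcd_mul_left]
    rw [Nat.Coprime] at hb2
    rw [Nat.gcd_comm] at hb2
    rw [hb2, mul_one]
  · intro a ha
    simp only [Finset.mem_coe, Finset.mem_filter, Finset.mem_univ, true_and] at ha
    simp only [Finset.mem_coe, Finset.mem_filter, Finset.mem_range]
    have hdvd : d ∣ a.val := ha ▸ Nat.gcd_dvd_left _ _
    constructor
    · rw [Nat.div_lt_iff_lt_mul hdpos]
      calc a.val < m := a.val_lt
        _ = k * d := by rw [← hdk]; ring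
    · rw [Nat.Coprime, Nat.gcd_comm]
      have h2 : d * Nat.gcd (a.val / d) k = d := by
        conv_rhs => rw [← ha]
        rw [← Nat.gcd_mul_left, Nat.mul_div_cancel' hdvd, hdk]
      have := Nat.eq_of_mul_eq_mul_left hdpos (h2.trans (mul_one d).symm)
      exact this
  · intro b hb
    simp only [Finset.mem_coe, Finset.mem_filter, Finset.mem_range] at hb
    have hlt : d * b < m := by
      calc d * b < d * k := (Nat.mul_lt_mul_left hdpos).mpr hb.1
        _ = m := hdk
    dsimp only
    rw [ZMod.val_natCast, Nat.mod_eq_of_lt hlt, Nat.mul_div_cancel_left _ hdpos]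
  · intro a ha
    simp only [Finset.mem_coe, Finset.mem_filter, Finset.mem_univ, true_and] at ha
    have hdvd : d ∣ a.val := ha ▸ Nat.gcd_dvd_left _ _
    dsimp only
    rw [Nat.mul_div_cancel' hdvd]
    simp [ZMod.natCast_val, ZMod.cast_id]

end ZModPart

section TriPart


variable {n : Type} [Fintype n] [DecidableEq n] {R : Type} [CommRing R]

lemma det_of_wt (M : Matrix n n R) (f : n → ℕ) (hinj : Function.Injective f)
    (h : ∀ i j, M i j ≠ 0 → f i ≤ f j) : M.det = ∏ i, M i i := by
  rw [Matrix.det_apply]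
  rw [Finset.sum_eq_single (1 : Equiv.Perm n)]
  · simp
  · intro σ _ hσ
    obtain ⟨i₀, hi₀⟩ : ∃ i, σ i ≠ i := by
      by_contra hc
      push_neg at hc
      exact hσ (Equiv.ext hc)
    by_cases hz : ∀ i, M (σ i) i ≠ 0
    · exfalso
      have hle : ∀ i, f (σ i) ≤ f i := fun i => h _ _ (hz i)
      have hlt : f (σ i₀) < f i₀ :=
        lt_of_le_of_ne (hle i₀) (fun hh => hi₀ (hinj hh))
      have hsum : ∑ i, f (σ i) = ∑ i, f i := Equiv.sum_comp σ f
      have : ∑ i, f (σ i) < ∑ i, f i :=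
        Finset.sum_lt_sum (fun i _ => hle i) ⟨i₀, Finset.mem_univ _, hlt⟩
      omega
    · push_neg at hz
      obtain ⟨i, hi⟩ := hz
      have : (∏ i : n, M (σ i) i) = 0 := Finset.prod_eq_zero (Finset.mem_univ i) hi
      rw [this, smul_zero]
  · simp

lemma charpoly_of_wt (M : Matrix n n R) (f : n → ℕ) (hinj : Function.Injective f)
    (h : ∀ i j, M i j ≠ 0 → f i ≤ f j) : M.charpoly = ∏ i, (X - C (M i i)) := by
  rw [Matrix.charpoly, det_of_wt _ f hinj]
  · exact Finset.prod_congr rfl fun i _ => Matrix.charmatrix_apply_eq M i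
  · intro i j hne
    by_cases hij : i = j
    · exact hij ▸ le_refl _
    · rw [Matrix.charmatrix_apply_ne M _ _ hij] at hne
      refine h i j fun h0 => hne ?_
      rw [h0]; simp

end TriPart

section CharpolyPart


noncomputable def phiR : ℂ[X] →+* RatFunc ℂ := (algebraMap ℂ[X] (RatFunc ℂ) : ℂ[X] →+* RatFunc ℂ)
noncomputable def psiR : ℂ →+* RatFunc ℂ := phiR.comp (C : ℂ →+* ℂ[X])

variable {a b : Type} [Fintype a] [Fintype b] [DecidableEq a] [DecidableEq b]

lemma det_smul_sub_comm {K : Type} [Field K] (u : K) (hu : u ≠ 0)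
    (A : Matrix a b K) (B : Matrix b a K) :
    u ^ Fintype.card b * (u • (1 : Matrix a a K) - A * B).det
      = u ^ Fintype.card a * (u • (1 : Matrix b b K) - B * A).det := by
  have h1 : u • (1 : Matrix a a K) - A * B = u • ((1 : Matrix a a K) + ((-u⁻¹) • A) * B) := by
    rw [Matrix.smul_mul, smul_add, smul_smul]
    field_simp
    rw [sub_eq_add_neg]
    rw [neg_one_smul]
  have h2 : u • (1 : Matrix b b K) - B * A = u • ((1 : Matrix b b K) + B * ((-u⁻¹) • A)) := by
    rw [Matrix.mul_smul, smul_add, smul_smul]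
    field_simp
    rw [sub_eq_add_neg]
    rw [neg_one_smul]
  rw [h1, h2, Matrix.det_smul, Matrix.det_smul, Matrix.det_one_add_mul_comm]
  ring

lemma charmatrix_map_phiR (M : Matrix a a ℂ) :
    (Matrix.charmatrix M).map phiR = (phiR X) • (1 : Matrix a a (RatFunc ℂ)) - M.map psiR := by
  ext i j
  by_cases hij : i = j
  · subst hij
    simp [Matrix.charmatrix_apply_eq, Matrix.map_apply, psiR, Matrix.one_apply,
      Matrix.smul_apply, Matrix.sub_apply, map_sub]
  · simp [Matrix.charmatrix_apply_ne _ _ _ hij, Matrix.map_apply, psiR, Matrix.one_apply_ne hij,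
      Matrix.smul_apply, Matrix.sub_apply, hij]

lemma charpoly_mul_comm_pow (A : Matrix a b ℂ) (B : Matrix b a ℂ) :
    (A * B).charpoly * X ^ Fintype.card b = (B * A).charpoly * X ^ Fintype.card a := by
  have hφ : Function.Injective phiR := RatFunc.algebraMap_injective ℂ
  apply hφ
  have hX : phiR X ≠ 0 := fun h => X_ne_zero (hφ (h.trans (map_zero phiR).symm))
  have hmapAB : (A * B).map psiR = A.map psiR * B.map psiR := Matrix.map_mul
  have hmapBA : (B * A).map psiR = B.map psiR * A.map psiR := Matrix.map_mul
  rw [map_mul, map_mul, map_pow, map_pow]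
  rw [Matrix.charpoly, Matrix.charpoly, RingHom.map_det, RingHom.map_det,
    RingHom.mapMatrix_apply, RingHom.mapMatrix_apply,
    charmatrix_map_phiR, charmatrix_map_phiR, hmapAB, hmapBA]
  have := det_smul_sub_comm (phiR X) hX (A.map psiR) (B.map psiR)
  linear_combination this

end CharpolyPart

section PrimePart


lemma prod_one_sub_inv_eq (S : Finset ℕ) (hS : ∀ q ∈ S, q.Prime) :
    ∏ q ∈ S, (1 - 1/(q:ℂ)) = ((∏ q ∈ S, (q-1) : ℕ) : ℂ) / ((∏ q ∈ S, q : ℕ) : ℂ) := by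
  push_cast
  rw [← Finset.prod_div_distrib]
  apply Finset.prod_congr rfl
  intro q hq
  have hq2 := (hS q hq).two_le
  have hq0 : (q:ℂ) ≠ 0 := Nat.cast_ne_zero.mpr (by omega)
  have hcast : ((q - 1 : ℕ) : ℂ) = (q:ℂ) - 1 := by
    push_cast [Nat.cast_sub (by omega : 1 ≤ q)]; ring
  rw [hcast]
  field_simp

lemma prod_primes_ne_zero (S : Finset ℕ) (hS : ∀ q ∈ S, q.Prime) :
    ((∏ q ∈ S, q : ℕ) : ℂ) ≠ 0 := by
  push_cast
  apply Finset.prod_ne_zero_iff.mpr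
  intro q hq
  exact Nat.cast_ne_zero.mpr (hS q hq).ne_zero

lemma one_sub_inv_ne_zero {q : ℕ} (hq : q.Prime) : (1 - 1/(q:ℂ)) ≠ 0 := by
  have hq2 := hq.two_le
  have hq0 : (q:ℂ) ≠ 0 := Nat.cast_ne_zero.mpr (by omega)
  intro h
  have : (1:ℂ) = 1/(q:ℂ) := by linear_combination h
  rw [eq_div_iff hq0, one_mul] at this
  have h1 : q = 1 := by exact_mod_cast this
  omega

lemma helper_disj (A B : Finset ℕ) (hA : ∀ q ∈ A, q.Prime) (hB : ∀ q ∈ B, q.Prime)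
    (hd : Disjoint A B) {q : ℕ} (hq : q ∈ A) (hmax : ∀ x ∈ A ∪ B, x ≤ q)
    (heq : (∏ x ∈ A, (x - 1)) * ∏ x ∈ B, x = (∏ x ∈ B, (x - 1)) * ∏ x ∈ A, x) : False := by
  have hqp := hA q hq
  have hdvd : q ∣ (∏ x ∈ A, (x - 1)) * ∏ x ∈ B, x := by
    rw [heq]
    exact Dvd.dvd.mul_left (Finset.dvd_prod_of_mem (fun x => x) hq) _
  rcases (Nat.Prime.dvd_mul hqp).mp hdvd with h | h
  · obtain ⟨x, hx, hdx⟩ := hqp.prime.exists_mem_finset_dvd h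
    have hx2 := (hA x hx).two_le
    have hxq : x ≤ q := hmax x (Finset.mem_union_left _ hx)
    have hpos : 0 < x - 1 := by omega
    have := Nat.le_of_dvd hpos hdx
    omega
  · obtain ⟨x, hx, hdx⟩ := hqp.prime.exists_mem_finset_dvd h
    have : q = x := ((Nat.prime_dvd_prime_iff_eq hqp (hB x hx)).mp hdx)
    exact (Finset.disjoint_left.mp hd hq) (this ▸ hx)

lemma prod_one_sub_inv_inj (A B : Finset ℕ) (hA : ∀ q ∈ A, q.Prime) (hB : ∀ q ∈ B, q.Prime)
    (h : ∏ q ∈ A, (1 - 1/(q:ℂ)) = ∏ q ∈ B, (1 - 1/(q:ℂ))) : A = B := by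
  classical
  set A' := A \ B with hA'
  set B' := B \ A with hB'
  have hA'p : ∀ q ∈ A', q.Prime := fun q hq => hA q (Finset.mem_sdiff.mp hq).1
  have hB'p : ∀ q ∈ B', q.Prime := fun q hq => hB q (Finset.mem_sdiff.mp hq).1
  have hint : ∏ q ∈ A ∩ B, (1 - 1/(q:ℂ)) ≠ 0 :=
    Finset.prod_ne_zero_iff.mpr fun q hq => one_sub_inv_ne_zero (hA q (Finset.mem_inter.mp hq).1)
  have hsplitA := Finset.prod_inter_mul_prod_diff A B (fun q => (1 - 1/(q:ℂ)))
  have hsplitB := Finset.prod_inter_mul_prod_diff B A (fun q => (1 - 1/(q:ℂ)))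
  rw [Finset.inter_comm B A] at hsplitB
  have h' : ∏ q ∈ A', (1 - 1/(q:ℂ)) = ∏ q ∈ B', (1 - 1/(q:ℂ)) := by
    have := h
    rw [← hsplitA, ← hsplitB] at this
    exact mul_left_cancel₀ hint this
  -- convert to a nat equation
  rw [prod_one_sub_inv_eq A' hA'p, prod_one_sub_inv_eq B' hB'p] at h'
  rw [div_eq_div_iff (prod_primes_ne_zero A' hA'p) (prod_primes_ne_zero B' hB'p)] at h'
  have hnat : (∏ x ∈ A', (x - 1)) * ∏ x ∈ B', x = (∏ x ∈ B', (x - 1)) * ∏ x ∈ A', x := by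
    exact_mod_cast h'
  have hdisj : Disjoint A' B' := disjoint_sdiff_sdiff
  by_cases hne : (A' ∪ B').Nonempty
  · exfalso
    set q := (A' ∪ B').max' hne with hq
    have hqmem := (A' ∪ B').max'_mem hne
    have hmax : ∀ x ∈ A' ∪ B', x ≤ q := fun x hx => Finset.le_max' _ x hx
    rcases Finset.mem_union.mp hqmem with hmem | hmem
    · exact helper_disj A' B' hA'p hB'p hdisj hmem hmax hnat
    · refine helper_disj B' A' hB'p hA'p hdisj.symm hmem ?_ hnat.symm
      rwa [Finset.union_comm]
  · rw [Finset.not_nonempty_iff_eq_empty, Finset.union_eq_empty] at hne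
    have h1 : A ⊆ B := by
      rw [← Finset.sdiff_eq_empty_iff_subset]; exact hne.1
    have h2 : B ⊆ A := by
      rw [← Finset.sdiff_eq_empty_iff_subset]; exact hne.2
    exact Finset.Subset.antisymm h1 h2

lemma totient_ratio {k : ℕ} (hk : k ≠ 0) :
    (Nat.totient k : ℂ) / k = ∏ q ∈ k.primeFactors, (1 - 1/(q:ℂ)) := by
  have hprime : ∀ q ∈ k.primeFactors, q.Prime := fun q hq => Nat.prime_of_mem_primeFactors hq
  rw [prod_one_sub_inv_eq _ hprime]
  rw [div_eq_div_iff (Nat.cast_ne_zero.mpr hk) (prod_primes_ne_zero _ hprime)]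
  have h := Nat.totient_mul_prod_primeFactors k
  have h2 : (Nat.totient k) * ∏ q ∈ k.primeFactors, q = (∏ q ∈ k.primeFactors, (q-1)) * k := by
    rw [h]; ring
  exact_mod_cast congrArg (Nat.cast : ℕ → ℂ) h2

end PrimePart

section CountPart


variable {r : ℕ} {p e : Fin r → ℕ}

lemma fact_prod_pow (hp : ∀ i, (p i).Prime) (g : Fin r → ℕ) :
    (∏ i, p i ^ g i).factorization = ∑ i, Finsupp.single (p i) (g i) := by
  rw [Nat.factorization_prod (fun i _ => pow_ne_zero _ (hp i).ne_zero)]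
  apply Finset.sum_congr rfl
  intro i _
  exact Nat.Prime.factorization_pow (hp i)

lemma fact_apply (hp : ∀ i, (p i).Prime) (hinj : Function.Injective p) (g : Fin r → ℕ)
    (j : Fin r) : (∏ i, p i ^ g i).factorization (p j) = g j := by
  rw [fact_prod_pow hp, Finsupp.finset_sum_apply]
  rw [Finset.sum_eq_single j]
  · simp [Finsupp.single_apply]
  · intro i _ hij
    rw [Finsupp.single_apply, if_neg (fun hh => hij (hinj hh))]
  · simp

lemma count_main (hp : ∀ i, (p i).Prime) (hinj : Function.Injective p)
    (he : ∀ i, 1 ≤ e i) {m : ℕ} (hm : m = ∏ i, p i ^ e i) (T : Finset (Fin r)) :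
    ((m.divisors).filter fun c => c.primeFactors = T.image p).card = ∏ i ∈ T, e i := by
  have hm0 : m ≠ 0 := by
    rw [hm]
    exact Finset.prod_ne_zero_iff.mpr fun i _ => pow_ne_zero _ (hp i).ne_zero
  have hcard : (Fintype.piFinset fun i => if i ∈ T then Finset.Icc 1 (e i) else ({0} : Finset ℕ)).card
      = ∏ i ∈ T, e i := by
    rw [Fintype.card_piFinset]
    rw [show ∏ i, (if i ∈ T then Finset.Icc 1 (e i) else ({0} : Finset ℕ)).card
        = ∏ i, (if i ∈ T then e i else 1) from Finset.prod_congr rfl fun i _ => by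
          split <;> simp [Nat.card_Icc]]
    rw [Finset.prod_ite_mem, Finset.univ_inter]
  rw [← hcard]
  symm
  apply Finset.card_nbij (fun f => ∏ i, p i ^ f i)
  · intro f hf
    simp only [Finset.mem_coe, Fintype.mem_piFinset] at hf
    have hfle : ∀ i, f i ≤ e i := by
      intro i
      have := hf i
      split at this
      · exact (Finset.mem_Icc.mp this).2
      · simp only [Finset.mem_singleton] at this; omega
    have hfT : ∀ i, (f i ≠ 0 ↔ i ∈ T) := by
      intro i
      have := hf i
      constructor
      · intro h0
        by_contra hiT
        rw [if_neg hiT] at this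
        simp only [Finset.mem_singleton] at this
        exact h0 this
      · intro hiT
        rw [if_pos hiT] at this
        have := (Finset.mem_Icc.mp this).1
        omega
    have hdvd : (∏ i, p i ^ f i) ∣ m := by
      rw [hm]
      exact Finset.prod_dvd_prod_of_dvd _ _ fun i _ => pow_dvd_pow _ (hfle i)
    have hne : (∏ i, p i ^ f i) ≠ 0 :=
      Finset.prod_ne_zero_iff.mpr fun i _ => pow_ne_zero _ (hp i).ne_zero
    rw [Finset.mem_coe, Finset.mem_filter, Nat.mem_divisors]
    refine ⟨⟨hdvd, hm0⟩, ?_⟩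
    ext q
    rw [← Nat.support_factorization, Finsupp.mem_support_iff, fact_prod_pow hp,
      Finsupp.finset_sum_apply]
    simp only [Finsupp.single_apply]
    constructor
    · intro hq
      obtain ⟨i, _, hi⟩ := Finset.exists_ne_zero_of_sum_ne_zero hq
      have hpi : p i = q := by by_contra hc; rw [if_neg hc] at hi; exact hi rfl
      rw [if_pos hpi] at hi
      exact Finset.mem_image.mpr ⟨i, (hfT i).mp hi, hpi⟩
    · intro hq
      obtain ⟨i, hiT, hpi⟩ := Finset.mem_image.mp hq
      have : ∑ x, (if p x = q then f x else 0) = f i := by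
        rw [Finset.sum_eq_single i]
        · rw [if_pos hpi]
        · intro x _ hxi
          rw [if_neg (fun hh => hxi (hinj (by rw [hh, hpi])))]
        · simp
      rw [this]
      exact (hfT i).mpr hiT
  · intro f hf g hg hfg
    funext j
    have hfg' : (∏ i, p i ^ f i) = ∏ i, p i ^ g i := hfg
    have h1 := fact_apply hp hinj f j
    rw [hfg', fact_apply hp hinj g j] at h1
    exact h1.symm
  · intro c hc
    rw [Finset.mem_coe, Finset.mem_filter, Nat.mem_divisors] at hc
    obtain ⟨⟨hcd, _⟩, hcp⟩ := hc
    have hc0 : c ≠ 0 := by rintro rfl; exact hm0 (zero_dvd_iff.mp hcd)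
    refine ⟨fun i => c.factorization (p i), ?_, ?_⟩
    · rw [Finset.mem_coe, Fintype.mem_piFinset]
      intro i
      split
      case isTrue hiT =>
        rw [Finset.mem_Icc]
        constructor
        · have : p i ∈ c.primeFactors := by
            rw [hcp]; exact Finset.mem_image.mpr ⟨i, hiT, rfl⟩
          rw [← Nat.support_factorization, Finsupp.mem_support_iff] at this
          omega
        · have hle := (Nat.factorization_le_iff_dvd hc0 hm0).mpr hcd
          have := hle (p i)
          rw [hm, fact_apply hp hinj e i] at this
          exact this
      case isFalse hiT =>
        simp only [Finset.mem_singleton]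
        have : p i ∉ c.primeFactors := by
          rw [hcp]
          intro hmem
          obtain ⟨j, hjT, hji⟩ := Finset.mem_image.mp hmem
          exact hiT (hinj hji ▸ hjT)
        rw [← Nat.support_factorization, Finsupp.mem_support_iff] at this
        simpa using this
    · have hself := Nat.factorization_prod_pow_eq_self hc0
      conv_rhs => rw [← hself]
      rw [Finsupp.prod]
      rw [Nat.support_factorization, hcp]
      rw [Finset.prod_image (fun a _ b _ hab => hinj hab)]
      symm
      apply Finset.prod_subset (Finset.subset_univ T)
      intro i _ hiT
      have : p i ∉ c.primeFactors := by
        rw [hcp]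
        intro hmem
        obtain ⟨j, hjT, hji⟩ := Finset.mem_image.mp hmem
        exact hiT (hinj hji ▸ hjT)
      rw [← Nat.support_factorization, Finsupp.mem_support_iff] at this
      push_neg at this
      rw [this, pow_zero]

end CountPart

/-- For `R = ℤ/mℤ` with `m = p₁^{e₁}⋯p_r^{e_r}` and uniform multiplication
probabilities, the algebraic multiplicity of the eigenvalue
`∏_{i∈T}(1 − 1/p_i)` of `B_R` is `∏_{i∈T} e_i`. -/
theorem stmt10 (r : ℕ) (p e : Fin r → ℕ) (hp : ∀ i, (p i).Prime)
    (hmono : StrictMono p) (he : ∀ i, 1 ≤ e i)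
    (m : ℕ) [NeZero m] (hm : m = ∏ i, p i ^ e i)
    (β : ZMod m → ℝ) (hβ : ∀ x, β x = 1 / (m : ℝ)) :
    ∀ T : Finset (Fin r),
      (((Bmat (ZMod m) β).map (fun t : ℝ => (t : ℂ))).charpoly).rootMultiplicity
          (∏ i ∈ T, (1 - 1 / (p i : ℂ))) =
        ∏ i ∈ T, e i := by
  intro T
  have hm0 : m ≠ 0 := NeZero.ne m
  have hinj : Function.Injective p := hmono.injective
  set D := {d : ℕ // d ∈ m.divisors} with hD
  set Bc : Matrix (ZMod m) (ZMod m) ℂ := (Bmat (ZMod m) β).map (fun t : ℝ => (t : ℂ)) with hBc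
  set CC : Matrix (ZMod m) D ℂ := fun a d => if Nat.gcd a.val m = d.1 then 1 else 0 with hCC
  set DD : Matrix D (ZMod m) ℂ :=
    fun d b => (Nsol m ((d.1 : ℕ) : ZMod m) b : ℂ) / m with hDD
  set lam : ℂ := ∏ i ∈ T, (1 - 1 / (p i : ℂ)) with hlam
  set μ : D → ℂ := fun d => ((Nat.totient (m / d.1) * d.1 : ℕ) : ℂ) / m with hμ
  have hlam0 : lam ≠ 0 :=
    Finset.prod_ne_zero_iff.mpr fun i _ => one_sub_inv_ne_zero (hp i)
  -- Step 1 : Bc = CC * DD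
  have hstep1 : Bc = CC * DD := by
    ext a b
    have hBval : Bc a b = (Nsol m a b : ℂ) / m := by
      rw [hBc]
      simp only [Matrix.map_apply, Bmat]
      rw [Finset.sum_congr rfl (fun x _ => hβ x), Finset.sum_const, nsmul_eq_mul]
      rw [Nsol]
      push_cast
      rw [mul_one_div]
      congr!
    rw [hBval, Matrix.mul_apply]
    have hgmem : Nat.gcd a.val m ∈ m.divisors :=
      Nat.mem_divisors.mpr ⟨Nat.gcd_dvd_right _ _, hm0⟩
    rw [Finset.sum_eq_single (⟨Nat.gcd a.val m, hgmem⟩ : D)]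
    · have hcongr := Nsol_congr a ((Nat.gcd a.val m : ℕ) : ZMod m)
        (gcd_assoc_left a) (gcd_assoc_right a) b
      simp [hCC, hDD, hcongr]
    · intro d _ hd
      have : Nat.gcd a.val m ≠ d.1 := fun hh => hd (by exact Subtype.ext hh.symm)
      rw [hCC]
      simp only [if_neg this, zero_mul]
    · intro h
      exact absurd (Finset.mem_univ _) h
  -- entry formula for DD * CC
  have hentry : ∀ d d' : D, (DD * CC) d d' =
      (∑ a ∈ Finset.univ.filter (fun a : ZMod m => Nat.gcd a.val m = d'.1),
        (Nsol m ((d.1 : ℕ) : ZMod m) a : ℂ)) / m := by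
    intro d d'
    rw [Matrix.mul_apply]
    simp only [hDD, hCC, mul_ite, mul_one, mul_zero]
    rw [← Finset.sum_filter, Finset.sum_div]
  -- triangularity
  have htri : ∀ d d' : D, (DD * CC) d d' ≠ 0 → d.1 ≤ d'.1 := by
    intro d d' hne
    rw [hentry] at hne
    have hsum : (∑ a ∈ Finset.univ.filter (fun a : ZMod m => Nat.gcd a.val m = d'.1),
        (Nsol m ((d.1 : ℕ) : ZMod m) a : ℂ)) ≠ 0 := by
      intro hh; rw [hh] at hne; simp at hne
    obtain ⟨a, ha, hNa⟩ := Finset.exists_ne_zero_of_sum_ne_zero hsum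
    rw [Finset.mem_filter] at ha
    have hN : Nsol m ((d.1 : ℕ) : ZMod m) a ≠ 0 := fun hh => hNa (by rw [hh]; simp)
    have hd1 := (Nat.mem_divisors.mp d.2).1
    obtain ⟨x, hx⟩ : ∃ x, ((d.1 : ℕ) : ZMod m) * x = a := by
      rw [Nsol] at hN
      obtain ⟨x, hx⟩ := Finset.card_ne_zero.mp hN
      rw [Finset.mem_filter] at hx
      exact ⟨x, hx.2⟩
    have hdvd : d.1 ∣ a.val := dvd_val_of_mem_range hd1 hx
    have : d.1 ∣ d'.1 := ha.2 ▸ Nat.dvd_gcd hdvd hd1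
    exact Nat.le_of_dvd (Nat.pos_of_mem_divisors d'.2) this
  -- diagonal entries
  have hdiag : ∀ d : D, (DD * CC) d d = μ d := by
    intro d
    have hd1 := (Nat.mem_divisors.mp d.2).1
    have hdpos := Nat.pos_of_mem_divisors d.2
    rw [hentry]
    have hterm : ∀ a ∈ Finset.univ.filter (fun a : ZMod m => Nat.gcd a.val m = d.1),
        (Nsol m ((d.1 : ℕ) : ZMod m) a : ℂ) = (d.1 : ℂ) := by
      intro a ha
      rw [Finset.mem_filter] at ha
      have hdvd : d.1 ∣ a.val := ha.2 ▸ Nat.gcd_dvd_left _ _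
      obtain ⟨x, hx⟩ := mem_range_of_dvd hd1 a hdvd
      rw [Nsol_shift _ _ x hx, Nsol_ker_card hd1 hdpos.ne']
    rw [Finset.sum_congr rfl hterm, Finset.sum_const, nsmul_eq_mul, gcd_count hd1 hdpos.ne']
    rw [hμ]
    push_cast
    ring
  -- charpoly of DD * CC
  have hcharDC : (DD * CC).charpoly = ∏ d : D, (X - C (μ d)) := by
    rw [charpoly_of_wt (DD * CC) (fun d => d.1)
      (fun d d' hdd => Subtype.ext hdd) htri]
    exact Finset.prod_congr rfl fun d _ => by rw [hdiag d]
  -- root multiplicity transfer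
  have hrm1 : Bc.charpoly.rootMultiplicity lam = (DD * CC).charpoly.rootMultiplicity lam := by
    have h1 : Bc.charpoly * X ^ Fintype.card D
        = (DD * CC).charpoly * X ^ Fintype.card (ZMod m) := by
      rw [hstep1]; exact charpoly_mul_comm_pow CC DD
    have hne1 : Bc.charpoly * X ^ Fintype.card D ≠ 0 :=
      mul_ne_zero (Matrix.charpoly_monic _).ne_zero (pow_ne_zero _ X_ne_zero)
    have hne2 : (DD * CC).charpoly * X ^ Fintype.card (ZMod m) ≠ 0 :=
      mul_ne_zero (Matrix.charpoly_monic _).ne_zero (pow_ne_zero _ X_ne_zero)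
    have hXrm : ∀ k : ℕ, ((X : ℂ[X]) ^ k).rootMultiplicity lam = 0 := by
      intro k
      apply rootMultiplicity_eq_zero
      simp only [IsRoot, eval_pow, eval_X]
      exact pow_ne_zero _ hlam0
    have h2 := congrArg (fun q : ℂ[X] => q.rootMultiplicity lam) h1
    simp only [rootMultiplicity_mul hne1, rootMultiplicity_mul hne2, hXrm] at h2
    omega
  -- root multiplicity of the product
  have hrm2 : (DD * CC).charpoly.rootMultiplicity lam
      = ((Finset.univ : Finset D).filter fun d => lam = μ d).card := by
    rw [hcharDC]
    have hmap : ∏ d : D, (X - C (μ d))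
        = ((Finset.univ.val.map μ).map (fun z : ℂ => X - C z)).prod := by
      rw [Multiset.map_map]
      rfl
    rw [← Polynomial.count_roots, hmap, roots_multiset_prod_X_sub_C, Multiset.count_map]
    rfl
  -- condition equivalence
  have hiff : ∀ d : D, (lam = μ d ↔ (m / d.1).primeFactors = T.image p) := by
    intro d
    have hd1 := (Nat.mem_divisors.mp d.2).1
    have hdpos := Nat.pos_of_mem_divisors d.2
    have hk0 : m / d.1 ≠ 0 := (Nat.div_ne_zero_iff_of_dvd hd1).mpr ⟨hm0, hdpos.ne'⟩
    have hmd : (m : ℂ) = (d.1 : ℂ) * (m / d.1 : ℕ) := by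
      exact_mod_cast congrArg (Nat.cast : ℕ → ℂ) (Nat.mul_div_cancel' hd1).symm
    have hd1c : (d.1 : ℂ) ≠ 0 := Nat.cast_ne_zero.mpr hdpos.ne'
    have hkc : ((m / d.1 : ℕ) : ℂ) ≠ 0 := Nat.cast_ne_zero.mpr hk0
    have hμd : μ d = ∏ q ∈ (m / d.1).primeFactors, (1 - 1 / (q : ℂ)) := by
      rw [hμ, ← totient_ratio hk0]
      push_cast
      rw [hmd]
      field_simp
    have hlamim : lam = ∏ q ∈ T.image p, (1 - 1 / (q : ℂ)) := by
      rw [hlam, Finset.prod_image (fun i _ j _ hij => hinj hij)]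
    constructor
    · intro hh
      apply prod_one_sub_inv_inj _ _
        (fun q hq => Nat.prime_of_mem_primeFactors hq)
        (fun q hq => by obtain ⟨i, _, rfl⟩ := Finset.mem_image.mp hq; exact hp i)
      rw [← hμd, ← hh, hlamim]
    · intro hh
      rw [hlamim, hμd, hh]
  -- counting bijection
  have hcount : (((Finset.univ : Finset D)).filter fun d => lam = μ d).card
      = ((m.divisors).filter fun c => c.primeFactors = T.image p).card := by
    apply Finset.card_nbij (fun d : D => m / d.1)
    · intro d hd
      rw [Finset.mem_coe, Finset.mem_filter] at hd
      have hd1 := (Nat.mem_divisors.mp d.2).1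
      rw [Finset.mem_coe, Finset.mem_filter, Nat.mem_divisors]
      exact ⟨⟨⟨d.1, (Nat.div_mul_cancel hd1).symm⟩, hm0⟩, (hiff d).mp hd.2⟩
    · intro d hd d' hd' hdd
      have hdd' : m / d.1 = m / d'.1 := hdd
      have h1 := (Nat.mem_divisors.mp d.2).1
      have h1' := (Nat.mem_divisors.mp d'.2).1
      apply Subtype.ext
      rw [← Nat.div_div_self h1 hm0, ← Nat.div_div_self h1' hm0, hdd']
    · intro c hc
      simp only [Finset.coe_filter, Set.mem_setOf_eq, Nat.mem_divisors] at hc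
      obtain ⟨⟨hcd, _⟩, hcp⟩ := hc
      have hmc : m / c ∈ m.divisors :=
        Nat.mem_divisors.mpr ⟨⟨c, (Nat.div_mul_cancel hcd).symm⟩, hm0⟩
      refine ⟨⟨m / c, hmc⟩, ?_, ?_⟩
      · simp only [Finset.coe_filter, Set.mem_setOf_eq, Finset.mem_univ, true_and]
        rw [hiff, Nat.div_div_self hcd hm0]
        exact hcp
      · exact Nat.div_div_self hcd hm0
  rw [hrm1, hrm2, hcount]
  exact count_main hp hinj he hm T
end

section
/- Let R be a finite chain ring. Then: (i) for every character χ : Rˣ → ℂˣ, the number ∑_{x∈Rˣ} β(x)·χ(x) is a root of the characteristic polynomial of B_R (regarded as a complex matrix); and (ii) conversely, every root of the characteristic polynomial of B_R is either 1 or equal to ∑_{x∈Rˣ} β(x)·χ(x) for some character χ of Rˣ. -/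
open Finset Polynomial

open scoped Classical

section Aux

/-- A scalar is a root of the characteristic polynomial of a matrix over a field
iff it has an eigenvector. -/
lemma charpoly_isRoot_iff {n : Type*} [Fintype n] [DecidableEq n]
    {K : Type*} [Field K] (M : Matrix n n K) (μ : K) :
    M.charpoly.IsRoot μ ↔ ∃ v ≠ 0, M.mulVec v = μ • v := by
  have h1 : M.charpoly.IsRoot μ ↔
      (Matrix.diagonal (fun _ : n => μ) - M).det = 0 := by
    rw [Polynomial.IsRoot, Matrix.charpoly, eval_det,
      Matrix.matPolyEquiv_charmatrix, eval_sub, eval_X, eval_C, Matrix.scalar_apply]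
  rw [h1, ← Matrix.exists_mulVec_eq_zero_iff]
  apply exists_congr
  intro v
  apply and_congr_right'
  rw [Matrix.sub_mulVec, sub_eq_zero]
  constructor
  · intro h
    rw [← h]
    funext i
    simp [Matrix.mulVec_diagonal]
  · intro h
    rw [h]
    funext i
    simp [Matrix.mulVec_diagonal]

variable {R : Type} [CommRing R] [Fintype R]

lemma Bmat_mulVec (β : R → ℝ) (v : R → ℂ) (a : R) :
    ((Bmat R β).map (fun t : ℝ => (t : ℂ))).mulVec v a
      = ∑ x : R, (β x : ℂ) * v (a * x) := by
  classical
  have : ∀ b : R, ((Bmat R β).map (fun t : ℝ => (t : ℂ))) a b * v b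
      = ∑ x ∈ Finset.univ.filter (fun x => a * x = b), (β x : ℂ) * v (a * x) := by
    intro b
    simp only [Matrix.map_apply, Bmat]
    push_cast
    rw [Finset.sum_mul]
    refine Finset.sum_congr rfl ?_
    intro x hx
    rw [Finset.mem_filter] at hx
    rw [hx.2]
  simp only [Matrix.mulVec, dotProduct]
  exact (Finset.sum_congr rfl (fun b _ => this b)).trans
    (Finset.sum_fiberwise_of_maps_to (fun x _ => Finset.mem_univ _) _)

lemma sum_units_eq (g : R → ℂ) (hg : ∀ x : R, ¬ IsUnit x → g x = 0) :
    ∑ x : R, g x = ∑ u : Rˣ, g ↑u := by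
  classical
  rw [show (∑ u : Rˣ, g ↑u) = ∑ x ∈ Finset.univ.image (Units.val : Rˣ → R), g x from
    (Finset.sum_image (fun x _ y _ h => Units.ext h)).symm]
  refine (Finset.sum_subset (Finset.subset_univ _) ?_).symm
  intro x _ hx
  refine hg x fun hu => hx ?_
  exact Finset.mem_image.mpr ⟨hu.unit, Finset.mem_univ _, hu.unit_spec⟩

/-- Simultaneous eigenvector extraction for a commuting family over ℂ. -/
lemma exists_invariant_scalar {V : Type*} [AddCommGroup V] [Module ℂ V]
    [FiniteDimensional ℂ V]
    (S : Set (V →ₗ[ℂ] V)) (hcomm : ∀ f ∈ S, ∀ g ∈ S, ∀ v, f (g v) = g (f v))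
    (l : List (V →ₗ[ℂ] V)) (hl : ∀ f ∈ l, f ∈ S)
    (W : Submodule ℂ V) (hW : W ≠ ⊥) (hinv : ∀ f ∈ S, ∀ w ∈ W, f w ∈ W) :
    ∃ W' : Submodule ℂ V, W' ≤ W ∧ W' ≠ ⊥ ∧ (∀ f ∈ S, ∀ w ∈ W', f w ∈ W') ∧
      ∀ f ∈ l, ∃ c : ℂ, ∀ w ∈ W', f w = c • w := by
  classical
  induction l generalizing W with
  | nil => exact ⟨W, le_refl _, hW, hinv, by simp⟩
  | cons f l ih =>
    obtain ⟨W', hW'le, hW'ne, hW'inv, hscal⟩ :=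
      ih (fun g hg => hl g (List.mem_cons_of_mem _ hg)) W hW hinv
    have hfS : f ∈ S := hl f List.mem_cons_self
    have hmap : ∀ w ∈ W', f w ∈ W' := hW'inv f hfS
    have hmap' : Set.MapsTo f W' W' := hmap
    let fr : W' →ₗ[ℂ] W' := f.restrict hmap
    have : Nontrivial W' := Submodule.nontrivial_iff_ne_bot.mpr hW'ne
    obtain ⟨c, hc⟩ := Module.End.exists_eigenvalue fr
    obtain ⟨w₀, hw₀⟩ := hc.exists_hasEigenvector
    refine ⟨W' ⊓ LinearMap.ker (f - c • LinearMap.id), ?_, ?_, ?_, ?_⟩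
    · exact le_trans inf_le_left hW'le
    · rw [Submodule.ne_bot_iff]
      refine ⟨(w₀ : V), ?_, fun h => hw₀.2 (Subtype.ext h)⟩
      refine Submodule.mem_inf.mpr ⟨w₀.2, ?_⟩
      rw [LinearMap.mem_ker, LinearMap.sub_apply, LinearMap.smul_apply, LinearMap.id_apply,
        sub_eq_zero]
      have := hw₀.apply_eq_smul
      have h2 : f (w₀ : V) = ((fr w₀ : W') : V) := rfl
      rw [this] at h2
      simpa using h2
    · intro g hgS w hw
      rw [Submodule.mem_inf] at hw ⊢
      refine ⟨hW'inv g hgS w hw.1, ?_⟩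
      have hw2 := hw.2
      rw [LinearMap.mem_ker, LinearMap.sub_apply, LinearMap.smul_apply, LinearMap.id_apply,
        sub_eq_zero] at hw2 ⊢
      rw [hcomm f hfS g hgS w, hw2, map_smul]
    · intro g hg
      rcases List.mem_cons.mp hg with h | h
      · subst h
        refine ⟨c, fun w hw => ?_⟩
        have hw2 := (Submodule.mem_inf.mp hw).2
        rwa [LinearMap.mem_ker, LinearMap.sub_apply, LinearMap.smul_apply,
          LinearMap.id_apply, sub_eq_zero] at hw2
      · obtain ⟨d, hd⟩ := hscal g h
        exact ⟨d, fun w hw => hd w (Submodule.mem_inf.mp hw).1⟩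

/-- The translation action of a unit on functions `R → ℂ`. -/
def actL (u : Rˣ) : (R → ℂ) →ₗ[ℂ] (R → ℂ) where
  toFun v := fun a => v (a * ↑u)
  map_add' := by intros; rfl
  map_smul' := by intros; rfl

end Aux

/-- For a finite chain ring `R` (a finite commutative local principal ideal
ring), the eigenvalues of `B_R` other than `1` are exactly the sums
`∑_{x∈Rˣ} β(x)·χ(x)` over characters `χ` of `Rˣ`. -/
theorem stmt11 (R : Type) [CommRing R] [Fintype R] [IsLocalRing R]
    [IsPrincipalIdealRing R]
    (β : R → ℝ) (hβ : ∀ x, 0 ≤ β x) (hβsum : ∑ x, β x = 1) :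
    (∀ χ : Rˣ →* ℂˣ,
      (((Bmat R β).map (fun t : ℝ => (t : ℂ))).charpoly).IsRoot
        (∑ x : Rˣ, (β (x : R) : ℂ) * (χ x : ℂ))) ∧
    (∀ lam : ℂ,
      (((Bmat R β).map (fun t : ℝ => (t : ℂ))).charpoly).IsRoot lam →
        lam = 1 ∨ ∃ χ : Rˣ →* ℂˣ, lam = ∑ x : Rˣ, (β (x : R) : ℂ) * (χ x : ℂ)) := by
  classical
  set M := (Bmat R β).map (fun t : ℝ => (t : ℂ)) with hM
  constructor
  · -- part (i)
    intro χ
    rw [charpoly_isRoot_iff]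
    set lam := ∑ x : Rˣ, (β (x : R) : ℂ) * (χ x : ℂ) with hlam
    set v : R → ℂ := fun a => if h : IsUnit a then (χ h.unit : ℂ) else 0 with hv
    have hv_mul : ∀ a x : R, IsUnit a → v (a * x) = v a * v x := by
      intro a x ha
      by_cases hx : IsUnit x
      · have hax : IsUnit (a * x) := ha.mul hx
        have : hax.unit = ha.unit * hx.unit := Units.ext (by simp)
        simp only [hv, dif_pos hax, dif_pos ha, dif_pos hx, this, map_mul, Units.val_mul]
      · have hax : ¬ IsUnit (a * x) := fun h => hx (isUnit_of_mul_isUnit_right h)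
        simp [hv, dif_neg hax, dif_neg hx]
    have hvsum : ∑ x : R, (β x : ℂ) * v x = lam := by
      rw [hlam, sum_units_eq (fun x => (β x : ℂ) * v x)
        (fun x hx => by simp [hv, dif_neg hx])]
      refine Finset.sum_congr rfl fun u _ => ?_
      have h : IsUnit ((u : Rˣ) : R) := u.isUnit
      have : h.unit = u := Units.ext h.unit_spec
      simp [hv, dif_pos h, this]
    refine ⟨v, ?_, ?_⟩
    · intro h0
      have : v 1 = 0 := by rw [h0]; rfl
      have h1 : v 1 = 1 := by
        have : (isUnit_one : IsUnit (1 : R)).unit = 1 := Units.ext (by simp)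
        simp [hv, dif_pos (isUnit_one : IsUnit (1 : R)), this]
      rw [h1] at this
      exact one_ne_zero this
    · funext a
      rw [Bmat_mulVec]
      by_cases ha : IsUnit a
      · calc ∑ x : R, (β x : ℂ) * v (a * x)
            = ∑ x : R, (β x : ℂ) * (v a * v x) := by
              refine Finset.sum_congr rfl fun x _ => by rw [hv_mul a x ha]
          _ = (∑ x : R, (β x : ℂ) * v x) * v a := by
              rw [Finset.sum_mul]; exact Finset.sum_congr rfl fun x _ => by ring
          _ = lam * v a := by rw [hvsum]
          _ = (lam • v) a := rfl
      · have : ∀ x : R, v (a * x) = 0 := by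
          intro x
          have hax : ¬ IsUnit (a * x) := fun h => ha (isUnit_of_mul_isUnit_left h)
          simp [hv, dif_neg hax]
        simp only [this, mul_zero, Finset.sum_const_zero]
        have : v a = 0 := by simp [hv, dif_neg ha]
        simp [this]
  · -- part (ii)
    intro lam hroot
    obtain ⟨v, hv0, hveig⟩ := (charpoly_isRoot_iff M lam).mp hroot
    -- the eigenspace as a submodule
    set W : Submodule ℂ (R → ℂ) :=
      LinearMap.ker (M.mulVecLin - lam • LinearMap.id) with hW
    have memW : ∀ w : R → ℂ, w ∈ W ↔ M.mulVec w = lam • w := by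
      intro w
      rw [hW, LinearMap.mem_ker, LinearMap.sub_apply, LinearMap.smul_apply,
        LinearMap.id_apply, sub_eq_zero, Matrix.mulVecLin_apply]
    have hWne : W ≠ ⊥ := by
      rw [Submodule.ne_bot_iff]
      exact ⟨v, (memW v).mpr hveig, hv0⟩
    set S : Set ((R → ℂ) →ₗ[ℂ] (R → ℂ)) := Set.range (actL (R := R)) with hS
    have hcomm : ∀ f ∈ S, ∀ g ∈ S, ∀ w, f (g w) = g (f w) := by
      rintro f ⟨u, rfl⟩ g ⟨u', rfl⟩ w
      funext a
      show w (a * ↑u * ↑u') = w (a * ↑u' * ↑u)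
      ring_nf
    have hinv : ∀ f ∈ S, ∀ w ∈ W, f w ∈ W := by
      rintro f ⟨u, rfl⟩ w hw
      rw [memW] at hw ⊢
      funext a
      rw [Bmat_mulVec]
      have h1 : ∀ x : R, (actL u w) (a * x) = w ((a * ↑u) * x) := by
        intro x
        show w (a * x * ↑u) = w (a * ↑u * x)
        ring_nf
      calc ∑ x : R, (β x : ℂ) * (actL u w) (a * x)
          = ∑ x : R, (β x : ℂ) * w ((a * ↑u) * x) := by
            exact Finset.sum_congr rfl fun x _ => by rw [h1]
        _ = (M.mulVec w) (a * ↑u) := (Bmat_mulVec β w (a * ↑u)).symm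
        _ = lam * w (a * ↑u) := by rw [hw]; rfl
        _ = (lam • actL u w) a := rfl
    obtain ⟨W', hW'le, hW'ne, _, hscal⟩ :=
      exists_invariant_scalar S hcomm
        ((Finset.univ : Finset Rˣ).toList.map (actL (R := R)))
        (by
          intro f hf
          rw [List.mem_map] at hf
          obtain ⟨u, _, rfl⟩ := hf
          exact ⟨u, rfl⟩)
        W hWne hinv
    obtain ⟨w₀, hw₀W', hw₀ne⟩ := Submodule.ne_bot_iff _ |>.mp hW'ne
    have hw₀W : M.mulVec w₀ = lam • w₀ := (memW w₀).mp (hW'le hw₀W')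
    -- extract the character values
    have hcfun : ∀ u : Rˣ, ∃ c : ℂ, ∀ a : R, w₀ (a * ↑u) = c * w₀ a := by
      intro u
      obtain ⟨c, hc⟩ := hscal (actL u)
        (List.mem_map.mpr ⟨u, by simp, rfl⟩)
      refine ⟨c, fun a => ?_⟩
      have := congrFun (hc w₀ hw₀W') a
      exact this
    choose c hc using hcfun
    obtain ⟨a₁, ha₁⟩ : ∃ a : R, w₀ a ≠ 0 := by
      by_contra h
      push_neg at h
      exact hw₀ne (funext h)
    have hcancel : ∀ c₁ c₂ : ℂ, c₁ * w₀ a₁ = c₂ * w₀ a₁ → c₁ = c₂ := by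
      intro c₁ c₂ h
      exact mul_right_cancel₀ ha₁ h
    have hc1 : c 1 = 1 := by
      refine hcancel _ _ ?_
      rw [← hc 1 a₁]
      simp
    have hcmul : ∀ u u' : Rˣ, c (u * u') = c u * c u' := by
      intro u u'
      refine hcancel _ _ ?_
      have h1 : w₀ (a₁ * ↑(u * u')) = c (u * u') * w₀ a₁ := hc _ _
      have h2 : w₀ (a₁ * ↑u' * ↑u) = c u * w₀ (a₁ * ↑u') := hc u (a₁ * ↑u')
      have h3 : w₀ (a₁ * ↑u') = c u' * w₀ a₁ := hc u' a₁
      have h4 : a₁ * ↑(u * u') = a₁ * ↑u' * ↑u := by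
        rw [Units.val_mul]; ring
      rw [← h1, h4, h2, h3]
      ring
    have hcne : ∀ u : Rˣ, c u ≠ 0 := by
      intro u hu0
      have := hcmul u u⁻¹
      rw [mul_inv_cancel, hc1, hu0, zero_mul] at this
      exact one_ne_zero this
    -- case split on whether w₀ 0 vanishes
    by_cases h0 : w₀ 0 = 0
    · -- produce a character
      right
      set χ : Rˣ →* ℂˣ :=
        { toFun := fun u => Units.mk0 (c u) (hcne u)
          map_one' := Units.ext (by simpa using hc1)
          map_mul' := fun u u' => Units.ext (by simpa using hcmul u u') } with hχ
      refine ⟨χ, ?_⟩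
      -- pick a support point of maximal depth
      have hart : IsArtinianRing R := inferInstance
      obtain ⟨k, hk⟩ : IsNilpotent (IsLocalRing.maximalIdeal R) := by
        rw [← IsLocalRing.jacobson_eq_maximalIdeal (⊥ : Ideal R) bot_ne_top]
        exact IsArtinianRing.isNilpotent_jacobson_bot
      set m := IsLocalRing.maximalIdeal R with hm
      have hkex : ∀ a : R, a ≠ 0 → ∃ i, a ∉ m ^ i := by
        intro a ha
        exact ⟨k, by rw [hk]; simpa using ha⟩
      set f : R → ℕ := fun a => if h : ∃ i, a ∉ m ^ i then Nat.find h else 0 with hf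
      set supp : Finset R := Finset.univ.filter (fun a => w₀ a ≠ 0) with hsupp
      have hsupp_ne : supp.Nonempty := ⟨a₁, by simp [hsupp, ha₁]⟩
      obtain ⟨a₀, ha₀supp, ha₀max⟩ := Finset.exists_max_image supp f hsupp_ne
      have ha₀ : w₀ a₀ ≠ 0 := by
        rw [hsupp, Finset.mem_filter] at ha₀supp
        exact ha₀supp.2
      have ha₀0 : a₀ ≠ 0 := fun h => ha₀ (h ▸ h0)
      -- facts about f on nonzero elements
      have hf_spec : ∀ a : R, a ≠ 0 → a ∉ m ^ (f a) := by
        intro a ha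
        rw [hf]
        simp only [dif_pos (hkex a ha)]
        exact Nat.find_spec (hkex a ha)
      have hf_mem : ∀ a : R, a ≠ 0 → ∀ j, j < f a → a ∈ m ^ j := by
        intro a ha j hj
        rw [hf] at hj
        simp only [dif_pos (hkex a ha)] at hj
        exact not_not.mp (Nat.find_min (hkex a ha) hj)
      have hf_pos : ∀ a : R, a ≠ 0 → 0 < f a := by
        intro a ha
        rcases Nat.eq_zero_or_pos (f a) with h | h
        · exfalso
          have := hf_spec a ha
          rw [h, pow_zero, Ideal.one_eq_top] at this
          exact this Submodule.mem_top
        · exact h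
      -- key vanishing: for nonunit x, w₀ (a₀ * x) = 0
      have hvanish : ∀ x : R, ¬ IsUnit x → w₀ (a₀ * x) = 0 := by
        intro x hx
        by_cases hax : a₀ * x = 0
        · rw [hax, h0]
        by_contra hne
        have haxsupp : a₀ * x ∈ supp := by simp [hsupp, hne]
        have hle : f (a₀ * x) ≤ f a₀ := ha₀max _ haxsupp
        have hxm : x ∈ m := (IsLocalRing.mem_maximalIdeal x).mpr (mem_nonunits_iff.mpr hx)
        have ha₀m : a₀ ∈ m ^ (f a₀ - 1) :=
          hf_mem a₀ ha₀0 _ (Nat.sub_lt (hf_pos a₀ ha₀0) one_pos)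
        have haxm : a₀ * x ∈ m ^ (f a₀) := by
          have h1 : a₀ * x ∈ m ^ (f a₀ - 1) * m := Ideal.mul_mem_mul ha₀m hxm
          have h2 : m ^ (f a₀ - 1) * m = m ^ (f a₀ - 1 + 1) := (pow_succ m _).symm
          rw [h2, Nat.sub_add_cancel (hf_pos a₀ ha₀0)] at h1
          exact h1
        have : a₀ * x ∈ m ^ (f (a₀ * x)) :=
          Ideal.pow_le_pow_right hle haxm
        exact hf_spec (a₀ * x) hax this
      -- evaluate the eigenvalue equation at a₀
      have heval : lam * w₀ a₀ = (∑ u : Rˣ, (β (u : R) : ℂ) * c u) * w₀ a₀ := by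
        have h1 : (M.mulVec w₀) a₀ = lam * w₀ a₀ := by rw [hw₀W]; rfl
        rw [Bmat_mulVec] at h1
        set g : R → ℂ := fun x => if h : IsUnit x then (β x : ℂ) * c h.unit else 0
          with hg
        have h2 : ∀ x : R, (β x : ℂ) * w₀ (a₀ * x) = g x * w₀ a₀ := by
          intro x
          by_cases hx : IsUnit x
          · rw [hg]
            simp only [dif_pos hx]
            have h5 : w₀ (a₀ * x) = c hx.unit * w₀ a₀ := by
              conv_lhs => rw [show x = ↑hx.unit from hx.unit_spec.symm]
              exact hc hx.unit a₀
            rw [h5]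
            ring
          · rw [hvanish x hx, hg]
            simp [dif_neg hx]
        have hsum : ∑ x : R, (β x : ℂ) * w₀ (a₀ * x) = (∑ x : R, g x) * w₀ a₀ := by
          rw [Finset.sum_mul]
          exact Finset.sum_congr rfl fun x _ => h2 x
        have hgsum : ∑ x : R, g x = ∑ u : Rˣ, (β ((u : Rˣ) : R) : ℂ) * c u := by
          rw [sum_units_eq g (fun x hx => by simp [hg, dif_neg hx])]
          refine Finset.sum_congr rfl fun u _ => ?_
          have h : IsUnit ((u : Rˣ) : R) := u.isUnit
          have hu : h.unit = u := Units.ext h.unit_spec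
          simp [hg, dif_pos h, hu]
        rw [hsum, hgsum] at h1
        exact h1.symm
      have hfin : lam = ∑ u : Rˣ, (β ((u : Rˣ) : R) : ℂ) * c u :=
        mul_right_cancel₀ ha₀ heval
      rw [hfin]
      refine Finset.sum_congr rfl fun u _ => ?_
      rw [hχ]
      simp [Units.val_mk0]
    · -- w₀ 0 ≠ 0 forces lam = 1
      left
      have h1 : (M.mulVec w₀) 0 = lam * w₀ 0 := by rw [hw₀W]; rfl
      rw [Bmat_mulVec] at h1
      have h2 : ∑ x : R, (β x : ℂ) * w₀ ((0 : R) * x) = w₀ 0 := by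
        have : ∀ x : R, (β x : ℂ) * w₀ ((0 : R) * x) = (β x : ℂ) * w₀ 0 := by
          intro x; rw [zero_mul]
        rw [Finset.sum_congr rfl (fun x _ => this x), ← Finset.sum_mul]
        have : ∑ x : R, (β x : ℂ) = ((∑ x : R, β x : ℝ) : ℂ) := by push_cast; rfl
        rw [this, hβsum]
        simp
      rw [h2] at h1
      exact mul_right_cancel₀ h0 (h1.symm.trans (one_mul (w₀ 0)).symm)
end

section
/- Let R be a finite chain ring with maximal ideal m, let k be the least positive integer with m^k = 0, and suppose β(x) = 1/|R| for all x ∈ R. Then the characteristic polynomial of B_R (regarded as a complex matrix) equals (X − 1)·(X − |Rˣ|/|R|)^k·X^{|R|−k−1}; that is, B_R has eigenvalues 1, |Rˣ|/|R| and 0 with algebraic multiplicities 1, k and |R| − k − 1 respectively. -/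
open Finset Polynomial

open scoped Classical

set_option maxHeartbeats 1000000
set_option synthInstance.maxHeartbeats 400000

namespace Stmt12Aux

/-- Mapped charpoly, expressed over the field of rational functions. -/
lemma charpoly_eq_det {s : Type} [Fintype s] [DecidableEq s] (M : Matrix s s ℂ) :
    algebraMap (Polynomial ℂ) (RatFunc ℂ) M.charpoly =
      ((algebraMap (Polynomial ℂ) (RatFunc ℂ) (X : Polynomial ℂ)) •
          (1 : Matrix s s (RatFunc ℂ)) -
        M.map ((algebraMap (Polynomial ℂ) (RatFunc ℂ)).comp
          (Polynomial.C : ℂ →+* Polynomial ℂ))).det := by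
  rw [Matrix.charpoly, RingHom.map_det, RingHom.mapMatrix_apply]
  congr 1
  ext i j
  by_cases hij : i = j
  · subst hij
    simp [Matrix.charmatrix_apply_eq, Matrix.map_apply, Matrix.sub_apply,
      Matrix.smul_apply, Matrix.one_apply_eq, mul_one, map_sub]
  · simp [Matrix.charmatrix_apply_ne _ _ _ hij, Matrix.map_apply, Matrix.sub_apply,
      Matrix.smul_apply, Matrix.one_apply_ne hij, hij, mul_zero, map_neg]

lemma det_aux {p q : Type} [Fintype p] [DecidableEq p] [Fintype q] [DecidableEq q]
    (h : Fintype.card p = Fintype.card q)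
    (A : Matrix p q (RatFunc ℂ)) (B : Matrix q p (RatFunc ℂ))
    {x : RatFunc ℂ} (hx : x ≠ 0) :
    (x • (1 : Matrix p p (RatFunc ℂ)) - A * B).det
      = (x • (1 : Matrix q q (RatFunc ℂ)) - B * A).det := by
  have key : ∀ (r t : Type) [Fintype r] [DecidableEq r] [Fintype t] [DecidableEq t]
      (C : Matrix r t (RatFunc ℂ)) (D : Matrix t r (RatFunc ℂ)),
      (x • (1 : Matrix r r (RatFunc ℂ)) - C * D)
        = x • ((1 : Matrix r r (RatFunc ℂ)) - x⁻¹ • (C * D)) := by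
    intro r t _ _ _ _ C D
    rw [smul_sub, smul_smul, mul_inv_cancel₀ hx, one_smul]
  rw [key p q A B, key q p B A, Matrix.det_smul, Matrix.det_smul, h]
  congr 1
  have h1 : x⁻¹ • (A * B) = (x⁻¹ • A) * B := (Matrix.smul_mul _ _ _).symm
  have h2 : x⁻¹ • (B * A) = B * (x⁻¹ • A) := (Matrix.mul_smul _ _ _).symm
  rw [h1, h2, Matrix.det_one_sub_mul_comm]

/-- `charpoly (A*B) = charpoly (B*A)` for rectangular complex matrices with
index types of the same cardinality. -/
lemma charpoly_mul_comm' {p q : Type} [Fintype p] [DecidableEq p] [Fintype q] [DecidableEq q]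
    (h : Fintype.card p = Fintype.card q) (A : Matrix p q ℂ) (B : Matrix q p ℂ) :
    (A * B).charpoly = (B * A).charpoly := by
  have hinj : Function.Injective (algebraMap (Polynomial ℂ) (RatFunc ℂ)) :=
    IsFractionRing.injective _ _
  apply hinj
  have hX : (algebraMap (Polynomial ℂ) (RatFunc ℂ)) (X : Polynomial ℂ) ≠ 0 := by
    exact fun h => Polynomial.X_ne_zero ((map_eq_zero_iff _ hinj).mp h)
  rw [charpoly_eq_det, charpoly_eq_det, Matrix.map_mul, Matrix.map_mul]
  exact det_aux h _ _ hX

end Stmt12Aux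

/-- For a finite chain ring `R` of length `k` with uniform multiplication
probabilities, the characteristic polynomial of `B_R` is
`(X − 1)·(X − |Rˣ|/|R|)^k·X^{|R|−k−1}`. -/
theorem stmt12 (R : Type) [CommRing R] [Fintype R] [IsLocalRing R]
    [IsPrincipalIdealRing R]
    (k : ℕ) (hk0 : 0 < k) (hk : IsLocalRing.maximalIdeal R ^ k = ⊥)
    (hkmin : ∀ j : ℕ, 0 < j → IsLocalRing.maximalIdeal R ^ j = ⊥ → k ≤ j)
    (β : R → ℝ) (hβ : ∀ x, β x = 1 / (Fintype.card R : ℝ)) :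
    ((Bmat R β).map (fun t : ℝ => (t : ℂ))).charpoly =
      (Polynomial.X - Polynomial.C 1) *
        (Polynomial.X -
          Polynomial.C ((Fintype.card Rˣ : ℂ) / (Fintype.card R : ℂ))) ^ k *
        Polynomial.X ^ (Fintype.card R - k - 1) := by
  classical
  set m : Ideal R := IsLocalRing.maximalIdeal R with hm
  obtain ⟨π, hπ⟩ : ∃ π : R, Ideal.span {π} = m :=
    ⟨Submodule.IsPrincipal.generator m, Submodule.IsPrincipal.span_singleton_generator m⟩
  have hspan : ∀ i : ℕ, m ^ i = Ideal.span {π ^ i} := by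
    intro i
    rw [← hπ, Ideal.span_singleton_pow]
  have hπmem : ∀ i : ℕ, π ^ i ∈ m ^ i := by
    intro i
    rw [hspan i]
    exact Ideal.mem_span_singleton_self _
  -- the "valuation"
  set v : R → ℕ := fun a => Nat.findGreatest (fun i => a ∈ m ^ i) k with hv
  have hvle : ∀ a, v a ≤ k := fun a => Nat.findGreatest_le k
  have hvmem : ∀ a, a ∈ m ^ (v a) := by
    intro a
    exact Nat.findGreatest_spec (P := fun i => a ∈ m ^ i) (Nat.zero_le k)
      (show a ∈ m ^ 0 by rw [pow_zero, Ideal.one_eq_top]; trivial)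
  have hle_v : ∀ (a : R) (i : ℕ), i ≤ k → a ∈ m ^ i → i ≤ v a := by
    intro a i hik hai
    exact Nat.le_findGreatest hik hai
  have hvnot : ∀ a : R, v a < k → a ∉ m ^ (v a + 1) := by
    intro a hva
    exact Nat.findGreatest_is_greatest (Nat.lt_succ_self _) hva
  -- stalling chains are trivial
  have hstall : ∀ i : ℕ, m ^ i ≤ m ^ (i + 1) → m ^ i = ⊥ := by
    intro i hle
    have step : ∀ j : ℕ, m ^ i ≤ m ^ (i + j) := by
      intro j
      induction j with
      | zero => simp
      | succ j ih =>
        calc m ^ i ≤ m ^ (i + j) := ih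
          _ = m ^ i * m ^ j := pow_add m i j
          _ ≤ m ^ (i + 1) * m ^ j := Ideal.mul_mono_left hle
          _ = m ^ (i + (j + 1)) := by rw [← pow_add]; congr 1; omega
    have h3 : m ^ (i + k) ≤ m ^ k := Ideal.pow_le_pow_right (Nat.le_add_left k i)
    have h4 : m ^ i ≤ ⊥ := hk ▸ le_trans (step k) h3
    exact le_bot_iff.mp h4
  -- nondegeneracy
  have hne : ∀ i : ℕ, i < k → π ^ i ∉ m ^ (i + 1) := by
    intro i hik hmemv
    have hle : m ^ i ≤ m ^ (i + 1) := by
      rw [hspan i, Ideal.span_le, Set.singleton_subset_iff]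
      exact hmemv
    have hbot := hstall i hle
    rcases Nat.eq_zero_or_pos i with h0 | hpos
    · subst h0
      have h1 : (1 : R) ∈ m ^ 0 := by simp
      rw [hbot] at h1
      exact one_ne_zero (Ideal.mem_bot.mp h1)
    · exact absurd (hkmin i hpos hbot) (by omega)
  have hπk : π ^ k = 0 := by
    have h1 := hπmem k
    rw [hk] at h1
    exact Ideal.mem_bot.mp h1
  have hv0 : v 0 = k :=
    le_antisymm (hvle 0) (hle_v 0 k le_rfl (zero_mem _))
  have hveq : ∀ (b : R) (i : ℕ), i < k → (v b = i ↔ b ∈ m ^ i ∧ b ∉ m ^ (i + 1)) := by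
    intro b i hik
    constructor
    · rintro rfl
      exact ⟨hvmem b, hvnot b hik⟩
    · rintro ⟨h1, h2⟩
      have l1 : i ≤ v b := hle_v b i (le_of_lt hik) h1
      have l2 : ¬ (i + 1 ≤ v b) := by
        intro hle
        exact h2 (Ideal.pow_le_pow_right hle (hvmem b))
      omega
  -- unit decomposition
  have hunit : ∀ a : R, ∃ u : Rˣ, a = (u : R) * π ^ (v a) := by
    intro a
    by_cases hva : v a = k
    · have h1 : a ∈ m ^ k := hva ▸ hvmem a
      rw [hk] at h1
      have ha0 : a = 0 := Ideal.mem_bot.mp h1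
      exact ⟨1, by rw [ha0, hv0, hπk, mul_zero]⟩
    · have hva' : v a < k := lt_of_le_of_ne (hvle a) hva
      have h1 : a ∈ Ideal.span {π ^ (v a)} := by rw [← hspan]; exact hvmem a
      obtain ⟨c, hc⟩ := Ideal.mem_span_singleton'.mp h1
      have hcunit : IsUnit c := by
        by_contra hcu
        have hcm : c ∈ m := (IsLocalRing.mem_maximalIdeal c).mpr (mem_nonunits_iff.mpr hcu)
        have h2 : a ∈ m ^ (v a + 1) := by
          rw [pow_succ']
          have h3 : c * π ^ (v a) ∈ m * m ^ (v a) :=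
            Ideal.mul_mem_mul hcm (hπmem (v a))
          rw [hc] at h3
          exact h3
        exact hvnot a hva' h2
      obtain ⟨u, hu⟩ := hcunit
      refine ⟨u, ?_⟩
      rw [← hu] at hc
      exact hc.symm
  -- lower bound for v on multiples of π^i
  have hvge : ∀ (i : ℕ), i ≤ k → ∀ x : R, i ≤ v (π ^ i * x) := by
    intro i hik x
    exact hle_v _ i hik (Ideal.mul_mem_right x _ (hπmem i))
  -- diagonal computation
  have hdiag : ∀ i : ℕ, i < k → ∀ x : R, (v (π ^ i * x) = i ↔ IsUnit x) := by
    intro i hik x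
    constructor
    · intro hvi
      by_contra hxu
      have hxm : x ∈ m := (IsLocalRing.mem_maximalIdeal x).mpr (mem_nonunits_iff.mpr hxu)
      have h2 : π ^ i * x ∈ m ^ (i + 1) := by
        rw [pow_succ]
        exact Ideal.mul_mem_mul (hπmem i) hxm
      exact ((hveq _ i hik).mp hvi).2 h2
    · intro hxu
      obtain ⟨u, rfl⟩ := hxu
      refine (hveq _ i hik).mpr ⟨Ideal.mul_mem_right _ _ (hπmem i), ?_⟩
      intro hmem2
      have heq : π ^ i = (π ^ i * (u : R)) * ((u⁻¹ : Rˣ) : R) := by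
        rw [mul_assoc, ← Units.val_mul, mul_inv_cancel, Units.val_one, mul_one]
      exact hne i hik (heq ▸ Ideal.mul_mem_right _ _ hmem2)
  -- powers of π are distinct, so k + 1 ≤ |R|
  have hkn : k + 1 ≤ Fintype.card R := by
    have hinj : Function.Injective (fun i : Fin (k + 1) => π ^ (i : ℕ)) := by
      intro i j hij
      have key : ∀ i j : Fin (k + 1), (i : ℕ) < (j : ℕ) → π ^ (i : ℕ) ≠ π ^ (j : ℕ) := by
        intro i j hlt heq
        have hik : (i : ℕ) < k := by
          have := j.isLt; omega
        apply hne (i : ℕ) hik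
        have h1 : π ^ (j : ℕ) ∈ m ^ (j : ℕ) := hπmem _
        have h2 : m ^ (j : ℕ) ≤ m ^ ((i : ℕ) + 1) := Ideal.pow_le_pow_right (by omega)
        exact heq ▸ h2 h1
      rcases lt_trichotomy (i : ℕ) (j : ℕ) with h | h | h
      · exact absurd hij (key i j h)
      · exact Fin.ext h
      · exact absurd hij.symm (key j i h)
    simpa using Fintype.card_le_of_injective _ hinj
  have hncast : ((Fintype.card R : ℂ)) ≠ 0 := by
    simp [Fintype.card_ne_zero]
  -- the factorization matrices
  set nn := Fintype.card R with hnn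
  set U : Matrix R (Fin nn) ℂ := fun a p => if v a = (p : ℕ) then 1 else 0 with hU
  set W : Matrix (Fin nn) R ℂ := fun p b =>
    if (p : ℕ) ≤ k then
      ((Finset.univ.filter (fun x : R => π ^ (p : ℕ) * x = b)).card : ℂ) / (nn : ℂ)
    else 0 with hW
  -- rows of B are rows of W
  have hrow : ∀ a b : R,
      (Finset.univ.filter (fun x : R => a * x = b)).card =
        (Finset.univ.filter (fun x : R => π ^ (v a) * x = b)).card := by
    intro a b
    obtain ⟨u, hu⟩ := hunit a
    refine Finset.card_bij' (fun x _ => (u : R) * x) (fun y _ => ((u⁻¹ : Rˣ) : R) * y)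
      ?_ ?_ ?_ ?_
    · intro x hx
      simp only [Finset.mem_filter, Finset.mem_univ, true_and] at hx ⊢
      calc π ^ (v a) * ((u : R) * x) = ((u : R) * π ^ (v a)) * x := by ring
        _ = a * x := by rw [← hu]
        _ = b := hx
    · intro y hy
      simp only [Finset.mem_filter, Finset.mem_univ, true_and] at hy ⊢
      calc a * (((u⁻¹ : Rˣ) : R) * y)
          = ((u : R) * π ^ (v a)) * (((u⁻¹ : Rˣ) : R) * y) := by rw [← hu]
        _ = ((u : R) * ((u⁻¹ : Rˣ) : R)) * (π ^ (v a) * y) := by ring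
        _ = π ^ (v a) * y := by rw [Units.mul_inv, one_mul]
        _ = b := hy
    · intro x _
      show ((u⁻¹ : Rˣ) : R) * ((u : R) * x) = x
      rw [← mul_assoc, ← Units.val_mul, inv_mul_cancel, Units.val_one, one_mul]
    · intro y _
      show (u : R) * (((u⁻¹ : Rˣ) : R) * y) = y
      rw [← mul_assoc, ← Units.val_mul, mul_inv_cancel, Units.val_one, one_mul]
  -- B = U * W
  have hB : (Bmat R β).map (fun t : ℝ => (t : ℂ)) = U * W := by
    ext a b
    have hvalt : v a < nn := lt_of_le_of_lt (hvle a) (by omega)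
    have hsum : ∀ p : Fin nn, U a p * W p b =
        if p = (⟨v a, hvalt⟩ : Fin nn) then W p b else 0 := by
      intro p
      rw [hU]
      simp only
      by_cases hp : v a = (p : ℕ)
      · rw [if_pos hp, if_pos (Fin.ext hp.symm), one_mul]
      · rw [if_neg hp, if_neg (fun h => hp (by rw [h])), zero_mul]
    rw [Matrix.map_apply, Matrix.mul_apply]
    rw [Finset.sum_congr rfl (fun p _ => hsum p), Finset.sum_ite_eq' Finset.univ _ _]
    rw [if_pos (Finset.mem_univ _)]
    have hWval : W (⟨v a, hvalt⟩ : Fin nn) b =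
        ((Finset.univ.filter (fun x : R => a * x = b)).card : ℂ) / (nn : ℂ) := by
      rw [hW]
      simp only
      rw [if_pos (by simpa using hvle a), hrow a b]
    rw [hWval, Bmat]
    rw [Finset.sum_congr rfl (fun x _ => hβ x), Finset.sum_const, nsmul_eq_mul]
    push_cast
    ring
  -- entries of T = W * U
  have hT : ∀ p q : Fin nn, (W * U) p q =
      if (p : ℕ) ≤ k then
        ((Finset.univ.filter (fun x : R => v (π ^ (p : ℕ) * x) = (q : ℕ))).card : ℂ) / (nn : ℂ)
      else 0 := by
    intro p q
    rw [Matrix.mul_apply]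
    by_cases hp : (p : ℕ) ≤ k
    · rw [if_pos hp]
      have hterm : ∀ b : R, W p b * U b q =
          (if v b = (q : ℕ) then
            ((Finset.univ.filter (fun x : R => π ^ (p : ℕ) * x = b)).card : ℂ) else 0)
            / (nn : ℂ) := by
        intro b
        rw [hW, hU]
        simp only
        rw [if_pos hp]
        by_cases hb : v b = (q : ℕ)
        · rw [if_pos hb, if_pos hb, mul_one]
        · rw [if_neg hb, if_neg hb, mul_zero, zero_div]
      rw [Finset.sum_congr rfl (fun b _ => hterm b), ← Finset.sum_div]
      congr 1
      rw [← Finset.sum_filter]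
      have hcard : (Finset.univ.filter (fun x : R => v (π ^ (p : ℕ) * x) = (q : ℕ))).card =
          ∑ b ∈ Finset.univ.filter (fun b : R => v b = (q : ℕ)),
            (Finset.univ.filter (fun x : R => π ^ (p : ℕ) * x = b)).card := by
        rw [Finset.card_eq_sum_card_fiberwise
          (f := fun x : R => π ^ (p : ℕ) * x)
          (t := Finset.univ.filter (fun b : R => v b = (q : ℕ)))
          (fun x hx => by
            simp only [Finset.coe_filter, Set.mem_setOf_eq, Finset.mem_filter, Finset.mem_univ, true_and] at hx ⊢
            exact hx)]
        refine Finset.sum_congr rfl ?_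
        intro b hb
        simp only [Finset.mem_filter, Finset.mem_univ, true_and] at hb
        congr 1
        ext x
        simp only [Finset.mem_filter, Finset.mem_univ, true_and]
        constructor
        · rintro ⟨_, h2⟩; exact h2
        · intro h2; exact ⟨by rw [h2]; exact hb, h2⟩
      rw [hcard]
      push_cast
      rfl
    · rw [if_neg hp]
      refine Finset.sum_eq_zero ?_
      intro b _
      rw [hW]
      simp only
      rw [if_neg hp, zero_mul]
  -- triangularity
  have htri : (W * U).BlockTriangular id := by
    intro p q hqp
    rw [hT]
    by_cases hp : (p : ℕ) ≤ k
    · rw [if_pos hp]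
      have hempty : (Finset.univ.filter
          (fun x : R => v (π ^ (p : ℕ) * x) = (q : ℕ))).card = 0 := by
        rw [Finset.card_eq_zero, Finset.filter_eq_empty_iff]
        intro x _
        have h1 := hvge (p : ℕ) hp x
        have h2 : (q : ℕ) < (p : ℕ) := hqp
        omega
      rw [hempty]
      simp
    · rw [if_neg hp]
  -- number of units
  have hunits_card : (Finset.univ.filter (fun x : R => IsUnit x)).card = Fintype.card Rˣ := by
    rw [Fintype.card, eq_comm]
    refine Finset.card_bij (fun (u : Rˣ) _ => (u : R)) ?_ ?_ ?_
    · intro u _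
      simp [Units.isUnit]
    · intro u1 _ u2 _ h
      exact Units.ext h
    · intro x hx
      simp only [Finset.mem_filter, Finset.mem_univ, true_and] at hx
      obtain ⟨u, hu⟩ := hx
      exact ⟨u, Finset.mem_univ _, hu⟩
  -- diagonal of T
  have hdiagT : ∀ p : Fin nn, (W * U) p p =
      (if (p : ℕ) < k then (Fintype.card Rˣ : ℂ) / (nn : ℂ)
        else if (p : ℕ) = k then 1 else 0) := by
    intro p
    rw [hT]
    by_cases h1 : (p : ℕ) < k
    · rw [if_pos (le_of_lt h1), if_pos h1]
      congr 2
      rw [← hunits_card]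
      congr 1
      ext x
      simp only [Finset.mem_filter, Finset.mem_univ, true_and]
      exact hdiag (p : ℕ) h1 x
    · rw [if_neg h1]
      by_cases h2 : (p : ℕ) = k
      · rw [if_pos (le_of_eq h2), if_pos h2, h2]
        have hall : (Finset.univ.filter
            (fun x : R => v (π ^ k * x) = k)) = Finset.univ := by
          rw [Finset.filter_eq_self]
          intro x _
          rw [hπk, zero_mul, hv0]
        rw [hall, Finset.card_univ, ← hnn]
        exact div_self (by rw [hnn]; exact hncast)
      · rw [if_neg (by omega), if_neg h2]
  -- put it all together
  rw [hB, Stmt12Aux.charpoly_mul_comm' (by simp [hnn]) U W,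
    Matrix.charpoly_of_upperTriangular _ htri]
  have hstep : (∏ p : Fin nn, ((X : Polynomial ℂ) - C ((W * U) p p))) =
      ∏ i ∈ Finset.range nn, ((X : Polynomial ℂ) -
        C (if i < k then (Fintype.card Rˣ : ℂ) / (nn : ℂ) else if i = k then 1 else 0)) := by
    rw [← Fin.prod_univ_eq_prod_range
      (fun i => (X : Polynomial ℂ) - C (if i < k then (Fintype.card Rˣ : ℂ) / (nn : ℂ)
        else if i = k then 1 else 0)) nn]
    exact Finset.prod_congr rfl (fun p _ => by rw [hdiagT p])
  have hsplit : Finset.range nn = Finset.range ((k + 1) + (nn - k - 1)) := by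
    congr 1
    omega
  rw [hstep, hsplit, Finset.prod_range_add]
  have h1 : ∏ i ∈ Finset.range (k + 1),
      ((X : Polynomial ℂ) - C (if i < k then (Fintype.card Rˣ : ℂ) / (nn : ℂ)
        else if i = k then 1 else 0)) =
      ((X : Polynomial ℂ) - C ((Fintype.card Rˣ : ℂ) / (nn : ℂ))) ^ k *
        ((X : Polynomial ℂ) - C 1) := by
    rw [Finset.prod_range_succ]
    congr 1
    · rw [Finset.prod_congr rfl (fun i hi => by
        rw [if_pos (Finset.mem_range.mp hi)]),
        Finset.prod_const, Finset.card_range]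
    · rw [if_neg (lt_irrefl k), if_pos rfl]
  have h2 : ∏ i ∈ Finset.range (nn - k - 1),
      ((X : Polynomial ℂ) - C (if (k + 1 + i) < k then (Fintype.card Rˣ : ℂ) / (nn : ℂ)
        else if (k + 1 + i) = k then 1 else 0)) =
      (X : Polynomial ℂ) ^ (nn - k - 1) := by
    rw [Finset.prod_congr rfl (fun i _ => by
      rw [if_neg (by omega), if_neg (by omega), map_zero, sub_zero]),
      Finset.prod_const, Finset.card_range]
  rw [h1, h2]
  ring
end
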